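/- arXiv:1006.0965 — 7 statements merged into one kernel-verified Lean document; each statement's English description precedes it below -/
import Mathlib

section
/- Under conditions (C1)–(C5), the quasistationary distributions are monotone under scaling: for every A > A_0, every y ≥ 1 and every x ∈ [0, A], one has Q_{yA}(yx) ≥ Q_A(x), where Q_B denotes the CDF of the quasistationary distribution at level B. -/
open MeasureTheory Set Filter Topology
open scoped ENNReal

/-- Measure comparison on `Iio` from comparison on `Iic`. -/
lemma qsd_iio_le (μ ν : Measure ℝ) (h : ∀ z : ℝ, μ (Set.Iic z) ≤ ν (Set.Iic z)) (c : ℝ) :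
    μ (Set.Iio c) ≤ ν (Set.Iio c) := by
  have hset : Set.Iio c = ⋃ n : ℕ, Set.Iic (c - ((n : ℝ) + 1)⁻¹) := by
    ext t
    simp only [Set.mem_Iio, Set.mem_iUnion, Set.mem_Iic]
    constructor
    · intro ht
      obtain ⟨n, hn⟩ := exists_nat_gt (c - t)⁻¹
      refine ⟨n, ?_⟩
      have hpos : (0 : ℝ) < c - t := by linarith
      have h1 : ((n : ℝ) + 1)⁻¹ ≤ c - t := by
        rw [inv_le_comm₀ (by positivity) hpos]
        exact le_of_lt (lt_of_lt_of_le hn (by linarith))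
      linarith
    · rintro ⟨n, hn⟩
      have : (0 : ℝ) < ((n : ℝ) + 1)⁻¹ := by positivity
      linarith
  rw [hset]
  rw [Directed.measure_iUnion]
  · refine iSup_le fun n => le_trans (h _)
      (measure_mono (Set.subset_iUnion (fun n : ℕ => Set.Iic (c - ((n : ℝ) + 1)⁻¹)) n))
  · apply Monotone.directed_le
    intro m n hmn
    apply Set.Iic_subset_Iic.2
    have : ((n : ℝ) + 1)⁻¹ ≤ ((m : ℝ) + 1)⁻¹ := by
      apply inv_anti₀ (by positivity)
      exact_mod_cast by exact_mod_cast add_le_add_left (Nat.cast_le.2 hmn) 1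
    linarith

/-- Measure comparison on lower sets from comparison on `Iic`. -/
lemma qsd_lower_le (μ ν : Measure ℝ) (h : ∀ z : ℝ, μ (Set.Iic z) ≤ ν (Set.Iic z))
    (htot : μ Set.univ ≤ ν Set.univ) (S : Set ℝ) (hS : IsLowerSet S) : μ S ≤ ν S := by
  rcases S.eq_empty_or_nonempty with rfl | hne
  · simp
  by_cases hbdd : BddAbove S
  · set c := sSup S with hc
    by_cases hcS : c ∈ S
    · have : S = Set.Iic c := by
        apply Set.Subset.antisymm
        · exact fun s hs => le_csSup hbdd hs
        · exact fun s hs => hS hs hcS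
      rw [this]; exact h c
    · have : S = Set.Iio c := by
        apply Set.Subset.antisymm
        · intro s hs
          have h1 : s ≤ c := le_csSup hbdd hs
          have h2 : s ≠ c := fun he => hcS (he ▸ hs)
          exact lt_of_le_of_ne h1 h2
        · intro s hs
          obtain ⟨w, hwS, hw⟩ := exists_lt_of_lt_csSup hne hs
          exact hS (le_of_lt hw) hwS
      rw [this]; exact qsd_iio_le μ ν h c
  · have : S = Set.univ := by
      ext s; simp only [Set.mem_univ, iff_true]
      obtain ⟨w, hwS, hw⟩ := not_bddAbove_iff.1 hbdd s
      exact hS (le_of_lt hw) hwS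
    rw [this]; exact htot

/-- Stochastic domination: integrals of antitone nonnegative functions. -/
lemma qsd_lintegral_mono (μ ν : Measure ℝ) (h : ∀ z : ℝ, μ (Set.Iic z) ≤ ν (Set.Iic z))
    (htot : μ Set.univ ≤ ν Set.univ) (G : ℝ → ℝ) (hG : Antitone G) (hG0 : ∀ t, 0 ≤ G t) :
    ∫⁻ t, ENNReal.ofReal (G t) ∂μ ≤ ∫⁻ t, ENNReal.ofReal (G t) ∂ν := by
  rw [lintegral_eq_lintegral_meas_lt μ (Eventually.of_forall hG0) hG.measurable.aemeasurable,
    lintegral_eq_lintegral_meas_lt ν (Eventually.of_forall hG0) hG.measurable.aemeasurable]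
  apply lintegral_mono
  intro t
  apply qsd_lower_le μ ν h htot
  intro a b hba ha
  exact lt_of_lt_of_le ha (hG hba)


lemma qsd_kernel_facts (K : ℝ → Measure ℝ) (hKprob : ∀ t : ℝ, IsProbabilityMeasure (K t))
    (hKsupp : ∀ t : ℝ, K t (Set.Iio (0 : ℝ)) = 0) (B : ℝ) (κB : ℝ → Measure ℝ)
    (hκB : ∀ t ∈ Set.Icc (0 : ℝ) B, κB t = (K t (Set.Iic B))⁻¹ • (K t).restrict (Set.Iic B))
    (hpos : ∀ t ∈ Set.Icc (0 : ℝ) B, K t (Set.Iic B) ≠ 0)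
    (t : ℝ) (ht : t ∈ Set.Icc (0 : ℝ) B) :
    (∀ z : ℝ, κB t (Set.Iic z)
        = ENNReal.ofReal ((K t (Set.Iic (min z B))).toReal / (K t (Set.Iic B)).toReal)) ∧
    IsProbabilityMeasure (κB t) ∧ κB t (Set.Icc (0 : ℝ) B)ᶜ = 0 := by
  haveI := hKprob t
  have ha0 : K t (Set.Iic B) ≠ 0 := hpos t ht
  have hatop : K t (Set.Iic B) ≠ ⊤ := measure_ne_top _ _
  have happly : ∀ s : Set ℝ, MeasurableSet s →
      κB t s = (K t (Set.Iic B))⁻¹ * K t (s ∩ Set.Iic B) := by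
    intro s hs
    rw [hκB t ht, Measure.smul_apply, Measure.restrict_apply hs, smul_eq_mul]
  refine ⟨?_, ?_, ?_⟩
  · intro z
    rw [happly _ measurableSet_Iic, Set.Iic_inter_Iic]
    set a := K t (Set.Iic B)
    set b := K t (Set.Iic (min z B))
    have hbtop : b ≠ ⊤ := measure_ne_top _ _
    have hfin : a⁻¹ * b ≠ ⊤ :=
      ENNReal.mul_ne_top (ENNReal.inv_ne_top.2 ha0) hbtop
    have htr : (a⁻¹ * b).toReal = b.toReal / a.toReal := by
      rw [ENNReal.toReal_mul, ENNReal.toReal_inv]; ring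
    rw [← htr, ENNReal.ofReal_toReal hfin]
  · constructor
    rw [happly _ MeasurableSet.univ, Set.univ_inter]
    exact ENNReal.inv_mul_cancel ha0 hatop
  · have hcompl : (Set.Icc (0 : ℝ) B)ᶜ = Set.Iio 0 ∪ Set.Ioi B := by
      ext s
      simp only [Set.mem_compl_iff, Set.mem_Icc, not_and_or, not_le, Set.mem_union,
        Set.mem_Iio, Set.mem_Ioi]
    rw [hcompl]
    apply measure_union_null
    · rw [happly _ measurableSet_Iio,
        measure_mono_null Set.inter_subset_left (hKsupp t), mul_zero]
    · rw [happly _ measurableSet_Ioi]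
      have he : Set.Ioi B ∩ Set.Iic B = ∅ := by
        ext s; simp only [Set.mem_inter_iff, Set.mem_Ioi, Set.mem_Iic, Set.mem_empty_iff_false,
          iff_false, not_and, not_le]
        intro h; exact h
      rw [he, measure_empty, mul_zero]

lemma qsd_bind_facts (κB : ℝ → Measure ℝ) (hmeas : Measurable κB) (B : ℝ)
    (hprob : ∀ t ∈ Set.Icc (0 : ℝ) B, IsProbabilityMeasure (κB t))
    (hnull : ∀ t ∈ Set.Icc (0 : ℝ) B, κB t (Set.Icc (0 : ℝ) B)ᶜ = 0)
    (m : Measure ℝ) (hm : IsProbabilityMeasure m) (hm0 : m (Set.Icc (0 : ℝ) B)ᶜ = 0) :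
    IsProbabilityMeasure (m.bind κB) ∧ (m.bind κB) (Set.Icc (0 : ℝ) B)ᶜ = 0 := by
  have hae : ∀ᵐ t ∂m, t ∈ Set.Icc (0 : ℝ) B := mem_ae_iff.2 hm0
  constructor
  · constructor
    rw [Measure.bind_apply MeasurableSet.univ hmeas.aemeasurable]
    rw [show (1 : ℝ≥0∞) = ∫⁻ _, 1 ∂m by simp]
    apply lintegral_congr_ae
    filter_upwards [hae] with t ht
    exact (hprob t ht).measure_univ
  · rw [Measure.bind_apply (measurableSet_Icc.compl) hmeas.aemeasurable]
    rw [show (0 : ℝ≥0∞) = ∫⁻ _, 0 ∂m by simp]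
    apply lintegral_congr_ae
    filter_upwards [hae] with t ht
    exact hnull t ht

/-- **Monotonicity of quasistationary distributions under scaling.**
Let `ρ(t,x) = K t (Iic x)` be a stationary Markov transition function on `[0,∞)`
(`K t` is a probability measure on `[0,∞)` for each `t`, measurably in `t`).  For
`A > A₀` the conditioned kernel `κ A` on `[0,A]` is the normalized restriction of `K`
to `(-∞,A]`, whose transition CDF from state `t` is `x ↦ ρ(t,x)/ρ(t,A)`.
(C1): the quasistationary distribution `Q A` exists for all `A > A₀` — the CDFs of the
`n`-step distributions of the chain with kernel `κ A` converge pointwise to the CDF of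
`Q A` for every initial distribution on `[0,A]` — and satisfies `Q A {0} = 0`.
(C2): `ρ(s,x)` is nonincreasing in `s` for fixed `x`.
(C3): `ρ(ts,tx)` is nondecreasing in `t > 0` for fixed `s,x`.
(C4): `ρ(s,x)/ρ(s,B)` is nonincreasing in `s` for fixed `x ≤ B`.
(C5): `ρ(ts,tx)/ρ(ts,tB)` is nondecreasing in `t > 0` for fixed `s` and `x ≤ B`.
Then for every `A > A₀`, `y ≥ 1` and `x ∈ [0,A]`, one has `Q_{yA}(yx) ≥ Q_A(x)`. -/

theorem quasistationary_cdf_monotone_under_scaling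
    (ρ : ℝ → ℝ → ℝ)
    (K : ℝ → Measure ℝ)
    (hKmeas : Measurable K)
    (hKprob : ∀ t : ℝ, IsProbabilityMeasure (K t))
    (hKsupp : ∀ t : ℝ, K t (Set.Iio (0 : ℝ)) = 0)
    (hρK : ∀ t x : ℝ, 0 ≤ t → (K t (Set.Iic x)).toReal = ρ t x)
    (A₀ : ℝ) (hA₀ : 0 ≤ A₀)
    (hρpos : ∀ A : ℝ, A₀ < A → ∀ t ∈ Set.Icc (0 : ℝ) A, 0 < ρ t A)
    -- the conditioned kernel `κ A`
    (κ : ℝ → ℝ → Measure ℝ)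
    (hκmeas : ∀ A : ℝ, Measurable (κ A))
    (hκ : ∀ A : ℝ, A₀ < A → ∀ t ∈ Set.Icc (0 : ℝ) A,
      κ A t = (K t (Set.Iic A))⁻¹ • (K t).restrict (Set.Iic A))
    -- the quasistationary distribution `Q A`
    (Q : ℝ → Measure ℝ)
    (hQprob : ∀ A : ℝ, A₀ < A → IsProbabilityMeasure (Q A))
    (hQsupp : ∀ A : ℝ, A₀ < A → Q A (Set.Icc (0 : ℝ) A)ᶜ = 0)
    -- (C1): quasistationarity
    (hC1 : ∀ A : ℝ, A₀ < A → ∀ μ : Measure ℝ, IsProbabilityMeasure μ →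
      μ (Set.Icc (0 : ℝ) A)ᶜ = 0 → ∀ x : ℝ,
      Tendsto (fun n : ℕ => ((fun m : Measure ℝ => m.bind (κ A))^[n] μ) (Set.Iic x))
        atTop (𝓝 (Q A (Set.Iic x))))
    (hC1zero : ∀ A : ℝ, A₀ < A → Q A {(0 : ℝ)} = 0)
    -- (C2)
    (hC2 : ∀ x : ℝ, ∀ s s' : ℝ, 0 ≤ s → s ≤ s' → ρ s' x ≤ ρ s x)
    -- (C3)
    (hC3 : ∀ s x : ℝ, 0 ≤ s → 0 ≤ x → ∀ t t' : ℝ, 0 < t → t ≤ t' →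
      ρ (t * s) (t * x) ≤ ρ (t' * s) (t' * x))
    -- (C4)
    (hC4 : ∀ B : ℝ, 0 < B → ∀ x : ℝ, x ≤ B → ∀ s s' : ℝ, 0 ≤ s → s ≤ s' →
      0 < ρ s B → 0 < ρ s' B → ρ s' x / ρ s' B ≤ ρ s x / ρ s B)
    -- (C5)
    (hC5 : ∀ s : ℝ, 0 ≤ s → ∀ B : ℝ, 0 < B → ∀ x : ℝ, x ≤ B →
      ∀ t t' : ℝ, 0 < t → t ≤ t' →
      0 < ρ (t * s) (t * B) → 0 < ρ (t' * s) (t' * B) →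
      ρ (t * s) (t * x) / ρ (t * s) (t * B) ≤ ρ (t' * s) (t' * x) / ρ (t' * s) (t' * B))
    (A : ℝ) (hA : A₀ < A) (y : ℝ) (hy : 1 ≤ y)
    (x : ℝ) (hx : x ∈ Set.Icc (0 : ℝ) A) :
    Q A (Set.Iic x) ≤ Q (y * A) (Set.Iic (y * x)) := by
  -- basic positivity facts
  have hApos : 0 < A := lt_of_le_of_lt hA₀ hA
  have hy0 : 0 < y := lt_of_lt_of_le one_pos hy
  have hyA : A ≤ y * A := le_mul_of_one_le_left hApos.le hy
  have hyA' : A₀ < y * A := lt_of_lt_of_le hA hyA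
  have hyApos : 0 < y * A := mul_pos hy0 hApos
  have hρnn : ∀ t u : ℝ, 0 ≤ t → 0 ≤ ρ t u := fun t u h => hρK t u h ▸ ENNReal.toReal_nonneg
  have hKpos : ∀ B : ℝ, A₀ < B → ∀ t ∈ Set.Icc (0 : ℝ) B, K t (Set.Iic B) ≠ 0 := by
    intro B hB t ht h0
    have h1 := hρpos B hB t ht
    rw [← hρK t B ht.1, h0] at h1
    simp at h1
  have hKF := fun (B : ℝ) (hB : A₀ < B) (t : ℝ) (ht : t ∈ Set.Icc (0 : ℝ) B) =>
    qsd_kernel_facts K hKprob hKsupp B (κ B) (hκ B hB) (hKpos B hB) t ht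
  have hκCDF : ∀ B : ℝ, A₀ < B → ∀ t ∈ Set.Icc (0 : ℝ) B, ∀ z : ℝ,
      κ B t (Set.Iic z) = ENNReal.ofReal (ρ t (min z B) / ρ t B) := by
    intro B hB t ht z
    rw [(hKF B hB t ht).1 z, hρK t (min z B) ht.1, hρK t B ht.1]
  set δ : Measure ℝ := Measure.dirac 0 with hδ
  set F : ℕ → Measure ℝ := fun n => (fun m : Measure ℝ => m.bind (κ A))^[n] δ with hF
  set G : ℕ → Measure ℝ := fun n => (fun m : Measure ℝ => m.bind (κ (y * A)))^[n] δ with hG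
  have hδprob : IsProbabilityMeasure δ := by rw [hδ]; infer_instance
  have hδnull : ∀ B : ℝ, 0 ≤ B → δ (Set.Icc (0 : ℝ) B)ᶜ = 0 := by
    intro B hB
    rw [hδ, Measure.dirac_apply' _ measurableSet_Icc.compl]
    simp [Set.indicator_apply, hB]
  have key : ∀ n : ℕ, (IsProbabilityMeasure (F n) ∧ F n (Set.Icc (0 : ℝ) A)ᶜ = 0)
      ∧ (IsProbabilityMeasure (G n) ∧ G n (Set.Icc (0 : ℝ) (y * A))ᶜ = 0)
      ∧ ∀ z : ℝ, F n (Set.Iic z) ≤ G n (Set.Iic (y * z)) := by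
    intro n
    induction n with
    | zero =>
      refine ⟨⟨hδprob, hδnull A hApos.le⟩, ⟨hδprob, hδnull _ hyApos.le⟩, ?_⟩
      intro z
      show δ (Set.Iic z) ≤ δ (Set.Iic (y * z))
      rw [hδ, Measure.dirac_apply' _ measurableSet_Iic, Measure.dirac_apply' _ measurableSet_Iic]
      by_cases hz : 0 ≤ z
      · have hyz : (0 : ℝ) ≤ y * z := mul_nonneg hy0.le hz
        simp [Set.indicator_apply, hz, hyz]
      · simp [Set.indicator_apply, hz]
    | succ n ih =>
      obtain ⟨⟨hFp, hFn⟩, ⟨hGp, hGn⟩, hcdf⟩ := ih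
      have hFs : F (n + 1) = (F n).bind (κ A) := Function.iterate_succ_apply' _ n δ
      have hGs : G (n + 1) = (G n).bind (κ (y * A)) := Function.iterate_succ_apply' _ n δ
      have hbF := qsd_bind_facts (κ A) (hκmeas A) A (fun t ht => (hKF A hA t ht).2.1)
        (fun t ht => (hKF A hA t ht).2.2) (F n) hFp hFn
      have hbG := qsd_bind_facts (κ (y * A)) (hκmeas _) (y * A)
        (fun t ht => (hKF _ hyA' t ht).2.1) (fun t ht => (hKF _ hyA' t ht).2.2) (G n) hGp hGn
      refine ⟨⟨hFs ▸ hbF.1, hFs ▸ hbF.2⟩, ⟨hGs ▸ hbG.1, hGs ▸ hbG.2⟩, ?_⟩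
      intro z
      set Gf : ℝ → ℝ :=
        fun t => ρ (min (max t 0) A) (min z A) / ρ (min (max t 0) A) A with hGfdef
      set Hf : ℝ → ℝ := fun s =>
        ρ (min (max s 0) (y * A)) (min (y * z) (y * A)) / ρ (min (max s 0) (y * A)) (y * A)
        with hHfdef
      have hclampA : ∀ t : ℝ, min (max t 0) A ∈ Set.Icc (0 : ℝ) A := fun t =>
        ⟨le_min (le_max_right _ _) hApos.le, min_le_right _ _⟩
      have hclampyA : ∀ t : ℝ, min (max t 0) (y * A) ∈ Set.Icc (0 : ℝ) (y * A) := fun t =>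
        ⟨le_min (le_max_right _ _) hyApos.le, min_le_right _ _⟩
      have hHanti : Antitone Hf := by
        intro s₁ s₂ hs
        have hcl : min (max s₁ 0) (y * A) ≤ min (max s₂ 0) (y * A) :=
          min_le_min (max_le_max hs le_rfl) le_rfl
        exact hC4 (y * A) hyApos (min (y * z) (y * A)) (min_le_right _ _) _ _
          (hclampyA s₁).1 hcl (hρpos _ hyA' _ (hclampyA s₁)) (hρpos _ hyA' _ (hclampyA s₂))
      have hHnn : ∀ s : ℝ, 0 ≤ Hf s := fun s =>
        div_nonneg (hρnn _ _ (hclampyA s).1) (hρnn _ _ (hclampyA s).1)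
      have hFeq : F (n + 1) (Set.Iic z) = ∫⁻ t, ENNReal.ofReal (Gf t) ∂(F n) := by
        rw [hFs, Measure.bind_apply measurableSet_Iic (hκmeas A).aemeasurable]
        apply lintegral_congr_ae
        filter_upwards [mem_ae_iff.2 hFn] with t ht
        rw [hκCDF A hA t ht z]
        have hcl : min (max t 0) A = t := by rw [max_eq_left ht.1]; exact min_eq_left ht.2
        simp only [hGfdef, hcl]
      have hGeq : G (n + 1) (Set.Iic (y * z)) = ∫⁻ s, ENNReal.ofReal (Hf s) ∂(G n) := by
        rw [hGs, Measure.bind_apply measurableSet_Iic (hκmeas _).aemeasurable]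
        apply lintegral_congr_ae
        filter_upwards [mem_ae_iff.2 hGn] with s hs
        rw [hκCDF (y * A) hyA' s hs (y * z)]
        have hcl : min (max s 0) (y * A) = s := by rw [max_eq_left hs.1]; exact min_eq_left hs.2
        simp only [hHfdef, hcl]
      have hpt : ∀ t ∈ Set.Icc (0 : ℝ) A, Gf t ≤ Hf (y * t) := by
        intro t ht
        have hcl1 : min (max t 0) A = t := by rw [max_eq_left ht.1]; exact min_eq_left ht.2
        have hcl2 : min (max (y * t) 0) (y * A) = y * t := by
          rw [max_eq_left (mul_nonneg hy0.le ht.1)]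
          exact min_eq_left (mul_le_mul_of_nonneg_left ht.2 hy0.le)
        have hmin : min (y * z) (y * A) = y * min z A := (mul_min_of_nonneg _ _ hy0.le).symm
        have hpos1 : 0 < ρ (1 * t) (1 * A) := by
          rw [one_mul, one_mul]; exact hρpos A hA t ht
        have hpos2 : 0 < ρ (y * t) (y * A) :=
          hρpos (y * A) hyA' (y * t)
            ⟨mul_nonneg hy0.le ht.1, mul_le_mul_of_nonneg_left ht.2 hy0.le⟩
        have h5 := hC5 t ht.1 A hApos (min z A) (min_le_right z A) 1 y one_pos hy hpos1 hpos2
        simp only [one_mul] at h5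
        simp only [hGfdef, hHfdef, hcl1, hcl2, hmin]
        exact h5
      have hstep1 : ∫⁻ t, ENNReal.ofReal (Gf t) ∂(F n)
          ≤ ∫⁻ t, ENNReal.ofReal (Hf (y * t)) ∂(F n) := by
        apply lintegral_mono_ae
        filter_upwards [mem_ae_iff.2 hFn] with t ht
        exact ENNReal.ofReal_le_ofReal (hpt t ht)
      have hstep2 : ∫⁻ t, ENNReal.ofReal (Hf (y * t)) ∂(F n)
          = ∫⁻ s, ENNReal.ofReal (Hf s) ∂(Measure.map (fun t => y * t) (F n)) := by
        rw [lintegral_map hHanti.measurable.ennreal_ofReal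
          (measurable_const_mul y)]
      have hstep3 : ∫⁻ s, ENNReal.ofReal (Hf s) ∂(Measure.map (fun t => y * t) (F n))
          ≤ ∫⁻ s, ENNReal.ofReal (Hf s) ∂(G n) := by
        apply qsd_lintegral_mono _ _ ?_ ?_ Hf hHanti hHnn
        · intro c
          rw [Measure.map_apply (measurable_const_mul y) measurableSet_Iic]
          have hpre : (fun t => y * t) ⁻¹' Set.Iic c = Set.Iic (c / y) := by
            ext t
            simp only [Set.mem_preimage, Set.mem_Iic]
            rw [le_div_iff₀ hy0, mul_comm]
          rw [hpre]
          have hyc : y * (c / y) = c := by field_simp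
          have := hcdf (c / y)
          rwa [hyc] at this
        · rw [Measure.map_apply (measurable_const_mul y) MeasurableSet.univ,
            Set.preimage_univ, hFp.measure_univ, hGp.measure_univ]
      calc F (n + 1) (Set.Iic z) = ∫⁻ t, ENNReal.ofReal (Gf t) ∂(F n) := hFeq
        _ ≤ ∫⁻ t, ENNReal.ofReal (Hf (y * t)) ∂(F n) := hstep1
        _ = ∫⁻ s, ENNReal.ofReal (Hf s) ∂(Measure.map (fun t => y * t) (F n)) := hstep2
        _ ≤ ∫⁻ s, ENNReal.ofReal (Hf s) ∂(G n) := hstep3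
        _ = G (n + 1) (Set.Iic (y * z)) := hGeq.symm
  have h1 := hC1 A hA δ hδprob (hδnull A hApos.le) x
  have h2 := hC1 (y * A) hyA' δ hδprob (hδnull _ hyApos.le) (y * x)
  exact le_of_tendsto_of_tendsto' h1 h2 (fun n => (key n).2.2 x)
end

section
/- Under conditions (C1)–(C5), the expected first exit time started from the quasistationary distribution is nondecreasing in the level: for every A > A_0 and every y ≥ 1, E[T_A^{Q_A}] ≤ E[T_{yA}^{Q_{yA}}], where T_B^{Q_B} = min{ n ≥ 1 : M_n > B } for the Markov chain (M_n) with transition function ρ and initial law M_0 ∼ Q_B. -/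
open MeasureTheory Set Filter Topology
open scoped ENNReal


lemma aux_lower_set_measure_le {y : ℝ} (hy : 0 < y) (μ ν : Measure ℝ)
    (hcdf : ∀ x : ℝ, μ (Iic x) ≤ ν (Iic (y * x)))
    (huniv : μ univ ≤ ν univ)
    (S : Set ℝ) (hS : ∀ ⦃a b : ℝ⦄, a ≤ b → b ∈ S → a ∈ S) :
    μ S ≤ ν ((fun s => s / y) ⁻¹' S) := by
  rcases S.eq_empty_or_nonempty with h | hne
  · simp [h]
  by_cases hbdd : BddAbove S
  · set c := sSup S with hc
    have hIio : Iio c ⊆ S := fun s hs => by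
      obtain ⟨s', hs', hss'⟩ := exists_lt_of_lt_csSup hne hs
      exact hS hss'.le hs'
    have hIic : S ⊆ Iic c := fun s hs => le_csSup hbdd hs
    have hmono : ∀ z : ℝ, μ (Iio z) ≤ ν (Iio (y * z)) := by
      intro z
      have hunion : Iio z = ⋃ n : ℕ, Iic (z - ((n : ℝ) + 1)⁻¹) := by
        ext s
        simp only [mem_Iio, mem_iUnion, mem_Iic]
        constructor
        · intro hs
          obtain ⟨n, hn⟩ := exists_nat_one_div_lt (sub_pos.2 hs)
          exact ⟨n, by rw [one_div] at hn; linarith⟩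
        · rintro ⟨n, hn⟩
          have : (0:ℝ) < ((n : ℝ) + 1)⁻¹ := by positivity
          linarith
      have hdir : Directed (· ⊆ ·) (fun n : ℕ => Iic (z - ((n : ℝ) + 1)⁻¹)) := by
        apply Monotone.directed_le
        intro a b hab
        apply Iic_subset_Iic.2
        have : ((b : ℝ) + 1)⁻¹ ≤ ((a : ℝ) + 1)⁻¹ := by
          apply inv_anti₀ (by positivity)
          exact_mod_cast by linarith [(Nat.cast_le (α := ℝ)).2 hab]
        linarith
      rw [hunion, hdir.measure_iUnion]
      refine iSup_le fun n => (hcdf _).trans (measure_mono ?_)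
      intro s hs
      simp only [mem_Iic] at hs
      simp only [mem_Iio]
      have : (0:ℝ) < ((n : ℝ) + 1)⁻¹ := by positivity
      nlinarith
    by_cases hcS : c ∈ S
    · have hSeq : S = Iic c := subset_antisymm hIic (fun s hs => hS hs hcS)
      have hpre : (fun s => s / y) ⁻¹' S = Iic (y * c) := by
        ext s; simp [hSeq, div_le_iff₀ hy, mul_comm]
      rw [hpre, hSeq]
      exact hcdf c
    · have hSeq : S = Iio c := by
        refine subset_antisymm (fun s hs => ?_) hIio
        have h1 : s ≤ c := hIic hs
        rcases lt_or_eq_of_le h1 with h | h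
        · exact h
        · exact absurd (h ▸ hs) hcS
      have hpre : (fun s => s / y) ⁻¹' S = Iio (y * c) := by
        ext s; simp [hSeq, div_lt_iff₀ hy, mul_comm]
      rw [hpre, hSeq]
      exact hmono c
  · have hSeq : S = univ := by
      ext s
      simp only [mem_univ, iff_true]
      obtain ⟨s', hs', hss'⟩ := not_bddAbove_iff.1 hbdd s
      exact hS hss'.le hs'
    rw [hSeq]
    simpa using huniv

lemma aux_lintegral_antitone_le {y : ℝ} (hy : 0 < y) (μ ν : Measure ℝ)
    (hcdf : ∀ x : ℝ, μ (Iic x) ≤ ν (Iic (y * x)))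
    (huniv : μ univ ≤ ν univ)
    (f : ℝ → ℝ) (hf : Antitone f) (hf0 : ∀ s, 0 ≤ f s) (hfm : Measurable f) :
    ∫⁻ s, ENNReal.ofReal (f s) ∂μ ≤ ∫⁻ s, ENNReal.ofReal (f (s / y)) ∂ν := by
  have hm2 : AEMeasurable (fun s : ℝ => f (s / y)) ν :=
    (hfm.comp (measurable_div_const' y)).aemeasurable
  rw [lintegral_eq_lintegral_meas_lt μ (ae_of_all _ hf0) hfm.aemeasurable,
      lintegral_eq_lintegral_meas_lt ν (ae_of_all _ fun s => hf0 _) hm2]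
  refine lintegral_mono fun t => ?_
  have hset : {a : ℝ | t < f (a / y)} = (fun s => s / y) ⁻¹' {a : ℝ | t < f a} := rfl
  rw [hset]
  exact aux_lower_set_measure_le hy μ ν hcdf huniv _
    (fun a b hab hb => lt_of_lt_of_le hb (hf hab))


lemma aux_enn_eq_tsum {a : ℝ≥0∞} (h : (∃ m : ℕ, a = m) ∨ a = ⊤) :
    a = ∑' n : ℕ, Set.indicator {m : ℕ | (m : ℝ≥0∞) < a} (fun _ => (1 : ℝ≥0∞)) n := by
  rcases h with ⟨m, rfl⟩ | rfl
  · have hset : {k : ℕ | (k : ℝ≥0∞) < (m : ℝ≥0∞)} = {k : ℕ | k < m} := by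
      ext k; simp [Nat.cast_lt]
    rw [hset]
    have h1 : ∑' n : ℕ, Set.indicator {k : ℕ | k < m} (fun _ => (1:ℝ≥0∞)) n
        = ∑ n ∈ Finset.range m, Set.indicator {k : ℕ | k < m} (fun _ => (1:ℝ≥0∞)) n := by
      refine tsum_eq_sum (fun k hk => ?_)
      simp only [Finset.mem_range] at hk
      simp [Set.indicator_apply, hk]
    rw [h1]
    have h2 : ∑ n ∈ Finset.range m, Set.indicator {k : ℕ | k < m} (fun _ => (1:ℝ≥0∞)) n
        = ∑ _n ∈ Finset.range m, (1:ℝ≥0∞) := by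
      refine Finset.sum_congr rfl fun k hk => ?_
      simp only [Finset.mem_range] at hk
      simp [Set.indicator_apply, hk]
    rw [h2]
    simp
  · have hset : {k : ℕ | (k : ℝ≥0∞) < ⊤} = univ := by
      ext k
      simp only [mem_setOf_eq, mem_univ, iff_true, lt_top_iff_ne_top]
      exact ENNReal.natCast_ne_top k
    rw [hset]
    simp only [Set.indicator_univ]
    exact (ENNReal.tsum_const_eq_top_of_ne_zero one_ne_zero).symm


/-- The first time after time `0` that the process `M` exceeds the level `A`
(`∞` if this never happens), as an extended nonnegative real. -/
noncomputable def hitTime {Ω : Type*} (M : ℕ → Ω → ℝ) (A : ℝ) (ω : Ω) : ℝ≥0∞ :=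
  ⨅ n ∈ {n : ℕ | 1 ≤ n ∧ A < M n ω}, (n : ℝ≥0∞)

lemma aux_exit_time (ρ : ℝ → ℝ → ℝ) (hρmeas : ∀ x : ℝ, Measurable fun s : ℝ => ρ s x)
    (B : ℝ) (QB : Measure ℝ) [IsProbabilityMeasure QB]
    (hsupp : QB (Icc (0:ℝ) B)ᶜ = 0)
    (hinv : ∀ x ∈ Icc (0:ℝ) B, (QB (Iic x)).toReal * ∫ s, ρ s B ∂QB = ∫ s, ρ s x ∂QB)
    (hρ0 : ∀ s ∈ Icc (0:ℝ) B, ∀ x : ℝ, x < 0 → ρ s x = 0)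
    (hρnn : ∀ s ∈ Icc (0:ℝ) B, ∀ x : ℝ, 0 ≤ ρ s x)
    (Ω : Type*) [mΩ : MeasurableSpace Ω] (P : Measure Ω) [IsProbabilityMeasure P]
    (X : ℕ → Ω → ℝ) (hXmeas : ∀ n, Measurable (X n)) (hX0 : P.map (X 0) = QB)
    (hMarkov : ∀ n : ℕ, ∀ x : ℝ,
      P[fun ω => (Set.Iic x).indicator (fun _ => (1:ℝ)) (X (n+1) ω) |
        ⨆ i ∈ Finset.range (n+1), MeasurableSpace.comap (X i) Real.measurableSpace]
      =ᵐ[P] fun ω => ρ (X n ω) x) :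
    ∫⁻ ω, hitTime X B ω ∂P = (1 - ENNReal.ofReal (∫ s, ρ s B ∂QB))⁻¹ := by
  set β : ℝ := ∫ s, ρ s B ∂QB with hβ
  have hae : ∀ᵐ s ∂QB, s ∈ Icc (0:ℝ) B := by
    rw [ae_iff]
    simpa [Set.compl_def] using hsupp
  have hβnn : 0 ≤ β := integral_nonneg_of_ae (hae.mono fun s hs => hρnn s hs B)
  set S : ℕ → Set Ω := fun n => ⋂ i ∈ Finset.Icc 1 n, (X i) ⁻¹' (Iic B) with hS
  have hSmeas : ∀ n, MeasurableSet (S n) := fun n =>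
    MeasurableSet.biInter (Finset.Icc 1 n).countable_toSet
      (fun i _ => (hXmeas i) measurableSet_Iic)
  have hSmem : ∀ n ω, ω ∈ S n ↔ ∀ i, 1 ≤ i → i ≤ n → X i ω ≤ B := by
    intro n ω
    simp only [hS, mem_iInter, Finset.mem_coe, Finset.mem_Icc, mem_preimage, mem_Iic]
    tauto
  have hS0 : S 0 = univ := by
    ext ω; simp only [hSmem, mem_univ, iff_true]
    intro i h1 h2; omega
  have hSsucc : ∀ n, S (n+1) = S n ∩ (X (n+1)) ⁻¹' (Iic B) := by
    intro n
    ext ω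
    simp only [hSmem, mem_inter_iff, mem_preimage, mem_Iic]
    constructor
    · intro h
      exact ⟨fun i h1 h2 => h i h1 (h2.trans (Nat.le_succ n)), h (n+1) (by omega) le_rfl⟩
    · rintro ⟨h1, h2⟩ i hi1 hi2
      by_cases hin : i ≤ n
      · exact h1 i hi1 hin
      · have : i = n + 1 := by omega
        rw [this]; exact h2
  set μn : ℕ → Measure ℝ := fun n => (P.restrict (S n)).map (X n) with hμn
  have hQIcc : QB (Icc (0:ℝ) B) = 1 := by
    have h := measure_add_measure_compl (μ := QB) (measurableSet_Icc (a := (0:ℝ)) (b := B))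
    rw [hsupp, add_zero] at h
    simpa using h
  have hQIic1 : ∀ x : ℝ, B ≤ x → QB (Iic x) = 1 := by
    intro x hx
    refine le_antisymm prob_le_one ?_
    calc (1:ℝ≥0∞) = QB (Icc 0 B) := hQIcc.symm
    _ ≤ QB (Iic x) := measure_mono (fun s hs => le_trans hs.2 hx)
  have hint : ∀ x : ℝ, x ≤ B → ∫ s, ρ s x ∂QB = (QB (Iic x)).toReal * β := by
    intro x hxB
    by_cases hx : 0 ≤ x
    · exact (hinv x ⟨hx, hxB⟩).symm
    · push_neg at hx
      have h1 : ∫ s, ρ s x ∂QB = 0 :=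
        integral_eq_zero_of_ae (hae.mono fun s hs => hρ0 s hs x hx)
      have h2 : QB (Iic x) = 0 := by
        refine measure_mono_null (fun s hs => ?_) hsupp
        intro hmem
        simp only [mem_Iic] at hs
        linarith [hmem.1]
      rw [h1, h2]
      simp
  -- the key induction
  have key : ∀ n, μn n = (ENNReal.ofReal β) ^ n • QB := by
    intro n
    induction n with
    | zero =>
      simp only [hμn, hS0, pow_zero, one_smul, Measure.restrict_univ]
      exact hX0
    | succ n ih =>
      haveI hfin : IsFiniteMeasure (μn (n+1)) := by
        constructor
        rw [hμn, Measure.map_apply (hXmeas _) MeasurableSet.univ, preimage_univ,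
          Measure.restrict_apply_univ]
        exact measure_lt_top P _
      refine Measure.ext_of_Iic _ _ (fun x => ?_)
      set x' : ℝ := min x B with hx'
      have hx'B : x' ≤ B := min_le_right x B
      have step1 : μn (n+1) (Iic x) = P ((X (n+1)) ⁻¹' (Iic x') ∩ S n) := by
        rw [hμn, Measure.map_apply (hXmeas _) measurableSet_Iic,
          Measure.restrict_apply ((hXmeas _) measurableSet_Iic)]
        congr 1
        rw [hSsucc n]
        ext ω
        simp only [mem_inter_iff, mem_preimage, mem_Iic, hx', le_min_iff]
        tauto
      have hm : (⨆ i ∈ Finset.range (n+1),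
          MeasurableSpace.comap (X i) Real.measurableSpace) ≤ mΩ := by
        refine iSup₂_le fun i _ => ?_
        exact (hXmeas i).comap_le
      haveI : SigmaFinite (P.trim hm) := by
        haveI : IsFiniteMeasure (P.trim hm) :=
          ⟨by rw [trim_measurableSet_eq hm MeasurableSet.univ]; exact measure_lt_top P _⟩
        infer_instance
      have hSm : MeasurableSet[⨆ i ∈ Finset.range (n+1),
          MeasurableSpace.comap (X i) Real.measurableSpace] (S n) := by
        refine MeasurableSet.biInter (Finset.Icc 1 n).countable_toSet (fun i hi => ?_)
        have hile : MeasurableSpace.comap (X i) Real.measurableSpace ≤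
            ⨆ i ∈ Finset.range (n+1), MeasurableSpace.comap (X i) Real.measurableSpace := by
          refine le_iSup₂ (f := fun (i : ℕ) (_ : i ∈ Finset.range (n+1)) =>
            MeasurableSpace.comap (X i) Real.measurableSpace) i ?_
          have hi' : 1 ≤ i ∧ i ≤ n := Finset.mem_Icc.1 hi
          simp only [Finset.mem_range]
          omega
        exact hile _ ⟨Iic B, measurableSet_Iic, rfl⟩
      have hf_eq : (fun ω => (Iic x').indicator (fun _ => (1:ℝ)) (X (n+1) ω))
          = Set.indicator ((X (n+1)) ⁻¹' (Iic x')) (fun _ => (1:ℝ)) := by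
        ext ω
        by_cases h : X (n+1) ω ∈ Iic x' <;> simp [Set.indicator_apply, h]
      have hf_int : Integrable (fun ω => (Iic x').indicator (fun _ => (1:ℝ)) (X (n+1) ω)) P := by
        rw [hf_eq]
        exact (integrable_const (1:ℝ)).indicator ((hXmeas _) measurableSet_Iic)
      have step2 : P ((X (n+1)) ⁻¹' (Iic x') ∩ S n)
          = ENNReal.ofReal (∫ ω in S n, ρ (X n ω) x' ∂P) := by
        have e1 : ∫ ω in S n, (Iic x').indicator (fun _ => (1:ℝ)) (X (n+1) ω) ∂P
            = (P ((X (n+1)) ⁻¹' (Iic x') ∩ S n)).toReal := by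
          simp only [hf_eq]
          rw [integral_indicator_const (1:ℝ) ((hXmeas _) measurableSet_Iic), measureReal_def,
            Measure.restrict_apply ((hXmeas _) measurableSet_Iic)]
          simp
        have e2 : ∫ ω in S n, (Iic x').indicator (fun _ => (1:ℝ)) (X (n+1) ω) ∂P
            = ∫ ω in S n, ρ (X n ω) x' ∂P := by
          rw [← setIntegral_condExp hm hf_int hSm]
          refine setIntegral_congr_ae (hm _ hSm) ?_
          exact (hMarkov n x').mono fun ω h _ => h
        rw [← e2, e1, ENNReal.ofReal_toReal (measure_ne_top P _)]
      have step3 : ∫ ω in S n, ρ (X n ω) x' ∂P = β ^ n * ((QB (Iic x')).toReal * β) := by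
        have e3 : ∫ ω in S n, ρ (X n ω) x' ∂P = ∫ s, ρ s x' ∂(μn n) :=
          (integral_map (hXmeas n).aemeasurable (hρmeas x').aestronglyMeasurable).symm
        rw [e3, ih, integral_smul_measure, ENNReal.toReal_pow, ENNReal.toReal_ofReal hβnn,
          smul_eq_mul, hint x' hx'B]
      have hQeq : QB (Iic x') = QB (Iic x) := by
        rcases le_or_gt x B with h | h
        · rw [hx', min_eq_left h]
        · rw [hx', min_eq_right h.le, hQIic1 B le_rfl, hQIic1 x h.le]
      rw [step1, step2, step3, Measure.smul_apply, smul_eq_mul]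
      rw [ENNReal.ofReal_mul (by positivity), ENNReal.ofReal_mul ENNReal.toReal_nonneg,
        ENNReal.ofReal_pow hβnn, ENNReal.ofReal_toReal (measure_ne_top QB _), hQeq]
      ring
  have hPS : ∀ n, P (S n) = (ENNReal.ofReal β) ^ n := by
    intro n
    have h1 : P (S n) = μn n univ := by
      rw [hμn, Measure.map_apply (hXmeas n) MeasurableSet.univ, preimage_univ,
        Measure.restrict_apply_univ]
    rw [h1, key n, Measure.smul_apply, smul_eq_mul, measure_univ, mul_one]
  -- identification of survival events
  have hT : ∀ (n : ℕ) (ω : Ω), ((n : ℝ≥0∞) < hitTime X B ω ↔ ω ∈ S n) := by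
    intro n ω
    constructor
    · intro h
      rw [hSmem]
      intro i h1 h2
      by_contra hgt
      push_neg at hgt
      have hle : hitTime X B ω ≤ (i : ℝ≥0∞) := by
        unfold hitTime
        exact iInf₂_le i ⟨h1, hgt⟩
      have hin : (i : ℝ≥0∞) ≤ (n : ℝ≥0∞) := by exact_mod_cast h2
      exact absurd (lt_of_lt_of_le h (hle.trans hin)) (lt_irrefl _)
    · intro h
      rw [hSmem] at h
      have h1 : ((n + 1 : ℕ) : ℝ≥0∞) ≤ hitTime X B ω := by
        unfold hitTime
        refine le_iInf₂ fun k hk => ?_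
        have hk1 : n + 1 ≤ k := by
          by_contra hlt
          push_neg at hlt
          exact absurd (h k hk.1 (by omega)) (not_le.2 hk.2)
        exact_mod_cast hk1
      exact lt_of_lt_of_le (by exact_mod_cast Nat.lt_succ_self n) h1
  have hform : ∀ ω, (∃ m : ℕ, hitTime X B ω = m) ∨ hitTime X B ω = ⊤ := by
    intro ω
    by_cases hne : ∃ n : ℕ, n ∈ {n : ℕ | 1 ≤ n ∧ B < X n ω}
    · left
      refine ⟨Nat.find hne, le_antisymm ?_ ?_⟩
      · unfold hitTime
        exact iInf₂_le (Nat.find hne) (Nat.find_spec hne)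
      · unfold hitTime
        exact le_iInf₂ fun k hk => Nat.cast_le.2 (Nat.find_min' hne hk)
    · right
      push_neg at hne
      unfold hitTime
      simp only [mem_setOf_eq] at hne
      rw [iInf₂_eq_top]
      intro k hk
      exact absurd hk (hne k)
  have hTsum : ∀ ω, hitTime X B ω = ∑' n : ℕ, (S n).indicator (fun _ => (1:ℝ≥0∞)) ω := by
    intro ω
    rw [aux_enn_eq_tsum (hform ω)]
    refine tsum_congr fun n => ?_
    by_cases h : ω ∈ S n
    · simp [Set.indicator_apply, h, (hT n ω).2 h]
    · have h2 : ¬ ((n : ℝ≥0∞) < hitTime X B ω) := fun hc => h ((hT n ω).1 hc)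
      simp [Set.indicator_apply, h, h2]
  rw [lintegral_congr hTsum,
    lintegral_tsum (fun n => (measurable_const.indicator (hSmeas n)).aemeasurable)]
  have hterm : ∀ n : ℕ, ∫⁻ ω, (S n).indicator (fun _ => (1:ℝ≥0∞)) ω ∂P
      = (ENNReal.ofReal β) ^ n := by
    intro n
    rw [lintegral_indicator_const (hSmeas n), one_mul, hPS n]
  rw [tsum_congr hterm, ENNReal.tsum_geometric]

/-- **Monotonicity in the level of the expected first exit time started at the
quasistationary distribution.**
Let `ρ(t,x) = K t (Iic x)` be a stationary Markov transition function on `[0,∞)`.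
For `A > A₀` the conditioned kernel `κ A` on `[0,A]` is the normalized restriction of
`K` to `(-∞,A]` (transition CDF `x ↦ ρ(t,x)/ρ(t,A)`), and the quasistationary
distribution `Q A` is the pointwise limit of the `n`-step CDFs of the conditioned chain
for every initial distribution on `[0,A]`; in particular `Q A` is invariant for `κ A`.
Assume conditions (C1)–(C5) and that `∫ ρ(s,A) dQ_A(s) < 1`,
`∫ ρ(s,yA) dQ_{yA}(s) < 1`.  Let `(M_n)` and `(N_n)` be Markov chains with transition
function `ρ` started at `M_0 ∼ Q_A` and `N_0 ∼ Q_{yA}` respectively.  Then for every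
`A > A₀` and `y ≥ 1`, the expected exit times satisfy
`E[T_A^{Q_A}] ≤ E[T_{yA}^{Q_{yA}}]`. -/
theorem expected_exit_time_monotone_in_level
    (ρ : ℝ → ℝ → ℝ)
    (K : ℝ → Measure ℝ)
    (hKmeas : Measurable K)
    (hKprob : ∀ t : ℝ, IsProbabilityMeasure (K t))
    (hKsupp : ∀ t : ℝ, K t (Set.Iio (0 : ℝ)) = 0)
    (hρK : ∀ t x : ℝ, 0 ≤ t → (K t (Set.Iic x)).toReal = ρ t x)
    (hρmeas : ∀ x : ℝ, Measurable fun s : ℝ => ρ s x)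
    (A₀ : ℝ) (hA₀ : 0 ≤ A₀)
    (hρpos : ∀ A : ℝ, A₀ < A → ∀ t ∈ Set.Icc (0 : ℝ) A, 0 < ρ t A)
    -- the conditioned kernel `κ A`
    (κ : ℝ → ℝ → Measure ℝ)
    (hκmeas : ∀ A : ℝ, Measurable (κ A))
    (hκ : ∀ A : ℝ, A₀ < A → ∀ t ∈ Set.Icc (0 : ℝ) A,
      κ A t = (K t (Set.Iic A))⁻¹ • (K t).restrict (Set.Iic A))
    -- the quasistationary distribution `Q A`
    (Q : ℝ → Measure ℝ)
    (hQprob : ∀ A : ℝ, A₀ < A → IsProbabilityMeasure (Q A))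
    (hQsupp : ∀ A : ℝ, A₀ < A → Q A (Set.Icc (0 : ℝ) A)ᶜ = 0)
    -- (C1): quasistationarity
    (hC1 : ∀ A : ℝ, A₀ < A → ∀ μ : Measure ℝ, IsProbabilityMeasure μ →
      μ (Set.Icc (0 : ℝ) A)ᶜ = 0 → ∀ x : ℝ,
      Tendsto (fun n : ℕ => ((fun m : Measure ℝ => m.bind (κ A))^[n] μ) (Set.Iic x))
        atTop (𝓝 (Q A (Set.Iic x))))
    (hC1zero : ∀ A : ℝ, A₀ < A → Q A {(0 : ℝ)} = 0)
    -- in particular, `Q A` is invariant for the conditioned kernel `κ A`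
    (hInv : ∀ A : ℝ, A₀ < A → ∀ x ∈ Set.Icc (0 : ℝ) A,
      (Q A (Set.Iic x)).toReal * ∫ s, ρ s A ∂(Q A) = ∫ s, ρ s x ∂(Q A))
    -- (C2)
    (hC2 : ∀ x : ℝ, ∀ s s' : ℝ, 0 ≤ s → s ≤ s' → ρ s' x ≤ ρ s x)
    -- (C3)
    (hC3 : ∀ s x : ℝ, 0 ≤ s → 0 ≤ x → ∀ t t' : ℝ, 0 < t → t ≤ t' →
      ρ (t * s) (t * x) ≤ ρ (t' * s) (t' * x))
    -- (C4)
    (hC4 : ∀ B : ℝ, 0 < B → ∀ x : ℝ, x ≤ B → ∀ s s' : ℝ, 0 ≤ s → s ≤ s' →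
      0 < ρ s B → 0 < ρ s' B → ρ s' x / ρ s' B ≤ ρ s x / ρ s B)
    -- (C5)
    (hC5 : ∀ s : ℝ, 0 ≤ s → ∀ B : ℝ, 0 < B → ∀ x : ℝ, x ≤ B →
      ∀ t t' : ℝ, 0 < t → t ≤ t' →
      0 < ρ (t * s) (t * B) → 0 < ρ (t' * s) (t' * B) →
      ρ (t * s) (t * x) / ρ (t * s) (t * B) ≤ ρ (t' * s) (t' * x) / ρ (t' * s) (t' * B))
    (A : ℝ) (hA : A₀ < A) (y : ℝ) (hy : 1 ≤ y)
    -- finiteness of the expectations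
    (hβA : ∫ s, ρ s A ∂(Q A) < 1)
    (hβyA : ∫ s, ρ s (y * A) ∂(Q (y * A)) < 1)
    -- the Markov chain `(M_n)` with transition function `ρ` and `M_0 ∼ Q_A`, and the
    -- Markov chain `(N_n)` with transition function `ρ` and `N_0 ∼ Q_{yA}`
    (Ω : Type*) [MeasurableSpace Ω] (P : Measure Ω) (hP : IsProbabilityMeasure P)
    (M N : ℕ → Ω → ℝ)
    (hMmeas : ∀ n : ℕ, Measurable (M n)) (hNmeas : ∀ n : ℕ, Measurable (N n))
    (hM0 : P.map (M 0) = Q A)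
    (hN0 : P.map (N 0) = Q (y * A))
    (hMarkovM : ∀ n : ℕ, ∀ x : ℝ,
      P[fun ω => (Set.Iic x).indicator (fun _ => (1 : ℝ)) (M (n + 1) ω) |
        ⨆ i ∈ Finset.range (n + 1), MeasurableSpace.comap (M i) Real.measurableSpace]
      =ᵐ[P] fun ω => ρ (M n ω) x)
    (hMarkovN : ∀ n : ℕ, ∀ x : ℝ,
      P[fun ω => (Set.Iic x).indicator (fun _ => (1 : ℝ)) (N (n + 1) ω) |
        ⨆ i ∈ Finset.range (n + 1), MeasurableSpace.comap (N i) Real.measurableSpace]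
      =ᵐ[P] fun ω => ρ (N n ω) x) :
    ∫⁻ ω, hitTime M A ω ∂P ≤ ∫⁻ ω, hitTime N (y * A) ω ∂P := by

  -- ### basic positivity and support facts
  have hA0 : 0 < A := lt_of_le_of_lt hA₀ hA
  have hy0 : 0 < y := lt_of_lt_of_le one_pos hy
  have hAyA : A ≤ y * A := le_mul_of_one_le_left hA0.le hy
  have hyA : A₀ < y * A := lt_of_lt_of_le hA hAyA
  have hyA0 : 0 < y * A := mul_pos hy0 hA0
  haveI hQA : IsProbabilityMeasure (Q A) := hQprob A hA
  haveI hQyA : IsProbabilityMeasure (Q (y * A)) := hQprob _ hyA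
  haveI := hP
  have hρnn : ∀ t : ℝ, 0 ≤ t → ∀ x : ℝ, 0 ≤ ρ t x := fun t ht x =>
    (hρK t x ht) ▸ ENNReal.toReal_nonneg
  have hρle1 : ∀ t : ℝ, 0 ≤ t → ∀ x : ℝ, ρ t x ≤ 1 := by
    intro t ht x
    rw [← hρK t x ht]
    have h1 : K t (Iic x) ≤ 1 := prob_le_one
    have := ENNReal.toReal_mono ENNReal.one_ne_top h1
    simpa using this
  have hρzero : ∀ t : ℝ, 0 ≤ t → ∀ x : ℝ, x < 0 → ρ t x = 0 := by
    intro t ht x hx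
    rw [← hρK t x ht]
    have hz : K t (Iic x) = 0 :=
      measure_mono_null (fun s hs => lt_of_le_of_lt hs hx) (hKsupp t)
    simp [hz]
  have hKne : ∀ B : ℝ, A₀ < B → ∀ s ∈ Icc (0:ℝ) B, K s (Iic B) ≠ 0 := by
    intro B hB s hs h0
    have hpos := hρpos B hB s hs
    rw [← hρK s B hs.1, h0] at hpos
    simp at hpos
  -- ### description of the conditioned kernel
  have hκIic : ∀ B : ℝ, A₀ < B → ∀ s ∈ Icc (0:ℝ) B, ∀ x : ℝ, x ≤ B →
      κ B s (Iic x) = ENNReal.ofReal (ρ s x / ρ s B) := by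
    intro B hB s hs x hx
    rw [hκ B hB s hs, Measure.smul_apply, smul_eq_mul,
      Measure.restrict_apply measurableSet_Iic, Iic_inter_Iic, min_eq_left hx]
    have e1 : K s (Iic x) = ENNReal.ofReal (ρ s x) := by
      rw [← hρK s x hs.1, ENNReal.ofReal_toReal (measure_ne_top _ _)]
    have e2 : K s (Iic B) = ENNReal.ofReal (ρ s B) := by
      rw [← hρK s B hs.1, ENNReal.ofReal_toReal (measure_ne_top _ _)]
    rw [e1, e2, ENNReal.ofReal_div_of_pos (hρpos B hB s hs), ENNReal.div_eq_inv_mul]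
  have hκuniv : ∀ B : ℝ, A₀ < B → ∀ s ∈ Icc (0:ℝ) B, κ B s univ = 1 := by
    intro B hB s hs
    rw [hκ B hB s hs, Measure.smul_apply, smul_eq_mul,
      Measure.restrict_apply MeasurableSet.univ, univ_inter]
    exact ENNReal.inv_mul_cancel (hKne B hB s hs) (measure_ne_top _ _)
  have hκcompl : ∀ B : ℝ, A₀ < B → ∀ s ∈ Icc (0:ℝ) B, κ B s (Icc (0:ℝ) B)ᶜ = 0 := by
    intro B hB s hs
    rw [hκ B hB s hs, Measure.smul_apply, smul_eq_mul,
      Measure.restrict_apply measurableSet_Icc.compl]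
    have hz : K s ((Icc (0:ℝ) B)ᶜ ∩ Iic B) = 0 := by
      refine measure_mono_null (fun t ht => ?_) (hKsupp s)
      simp only [mem_inter_iff, mem_compl_iff, mem_Icc, mem_Iic, not_and, not_le] at ht
      simp only [mem_Iio]
      rcases le_or_gt 0 t with h0 | h0
      · exact absurd (ht.1 h0) (not_lt.2 ht.2)
      · exact h0
    rw [hz, mul_zero]
  -- ### facts about the iterates of the conditioned kernel started at `δ₀`
  have hiter : ∀ B : ℝ, A₀ < B → ∀ n : ℕ,
      IsProbabilityMeasure ((fun m : Measure ℝ => m.bind (κ B))^[n] (Measure.dirac 0))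
      ∧ ((fun m : Measure ℝ => m.bind (κ B))^[n] (Measure.dirac 0)) (Icc (0:ℝ) B)ᶜ = 0 := by
    intro B hB
    have hB0 : 0 < B := lt_of_le_of_lt hA₀ hB
    intro n
    induction n with
    | zero =>
      constructor
      · rw [Function.iterate_zero_apply]
        infer_instance
      · rw [Function.iterate_zero_apply, Measure.dirac_apply' _ measurableSet_Icc.compl]
        simp [indicator_apply, hB0.le]
    | succ n ih =>
      obtain ⟨hprob, hnull⟩ := ih
      have haem : ∀ᵐ s ∂((fun m : Measure ℝ => m.bind (κ B))^[n] (Measure.dirac 0)),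
          s ∈ Icc (0:ℝ) B := by
        rw [ae_iff]; simpa [Set.compl_def] using hnull
      rw [Function.iterate_succ_apply']
      constructor
      · constructor
        rw [Measure.bind_apply MeasurableSet.univ (hκmeas B).aemeasurable,
          lintegral_congr_ae (haem.mono fun s hs => hκuniv B hB s hs)]
        simp
      · rw [Measure.bind_apply measurableSet_Icc.compl (hκmeas B).aemeasurable,
          lintegral_congr_ae (haem.mono fun s hs => hκcompl B hB s hs)]
        simp
  -- ### the clamping function onto `[0, A]`
  set clamp : ℝ → ℝ := fun s => max 0 (min s A) with hclamp
  have hclampmem : ∀ s, clamp s ∈ Icc (0:ℝ) A := fun s =>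
    ⟨le_max_left _ _, max_le hA0.le (min_le_right s A)⟩
  have hclampmono : Monotone clamp := fun a b hab =>
    max_le_max le_rfl (min_le_min hab le_rfl)
  have hclampeq : ∀ s ∈ Icc (0:ℝ) A, clamp s = s := fun s hs => by
    rw [hclamp]; dsimp only; rw [min_eq_left hs.2, max_eq_right hs.1]
  have hclampmeas : Measurable clamp :=
    measurable_const.max (measurable_id.min measurable_const)
  -- ### stochastic domination between the two iterated chains
  have hdom : ∀ n : ℕ, ∀ x : ℝ,
      ((fun m : Measure ℝ => m.bind (κ A))^[n] (Measure.dirac 0)) (Iic x)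
      ≤ ((fun m : Measure ℝ => m.bind (κ (y * A)))^[n] (Measure.dirac 0)) (Iic (y * x)) := by
    intro n
    induction n with
    | zero =>
      intro x
      simp only [Function.iterate_zero_apply]
      rw [Measure.dirac_apply' _ measurableSet_Iic, Measure.dirac_apply' _ measurableSet_Iic]
      by_cases hx : (0:ℝ) ≤ x
      · have h2 : (0:ℝ) ≤ y * x := mul_nonneg hy0.le hx
        simp [indicator_apply, hx, h2]
      · push_neg at hx
        have h2 : y * x < 0 := mul_neg_of_pos_of_neg hy0 hx
        simp [indicator_apply, not_le.2 hx, not_le.2 h2]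
    | succ n ih =>
      intro x
      obtain ⟨hp1, hn1⟩ := hiter A hA n
      obtain ⟨hp2, hn2⟩ := hiter (y * A) hyA n
      by_cases hx0 : 0 ≤ x
      · by_cases hxA : x ≤ A
        · -- main case `x ∈ [0, A]`
          have hyxA : y * x ≤ y * A := mul_le_mul_of_nonneg_left hxA hy0.le
          have haem1 : ∀ᵐ s ∂((fun m : Measure ℝ => m.bind (κ A))^[n] (Measure.dirac 0)),
              s ∈ Icc (0:ℝ) A := by rw [ae_iff]; simpa [Set.compl_def] using hn1
          have haem2 : ∀ᵐ s ∂((fun m : Measure ℝ => m.bind (κ (y * A)))^[n] (Measure.dirac 0)),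
              s ∈ Icc (0:ℝ) (y * A) := by rw [ae_iff]; simpa [Set.compl_def] using hn2
          have hymem : ∀ s : ℝ, y * clamp s ∈ Icc (0:ℝ) (y * A) := fun s =>
            ⟨mul_nonneg hy0.le (hclampmem s).1,
             mul_le_mul_of_nonneg_left (hclampmem s).2 hy0.le⟩
          set f : ℝ → ℝ := fun s => ρ (y * clamp s) (y * x) / ρ (y * clamp s) (y * A) with hfdef
          have hofReal : ∀ s : ℝ,
              ENNReal.ofReal (f s) = κ (y * A) (y * clamp s) (Iic (y * x)) := fun s =>
            (hκIic (y * A) hyA _ (hymem s) (y * x) hyxA).symm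
          have hfnn : ∀ s, 0 ≤ f s := fun s =>
            div_nonneg (hρnn _ (hymem s).1 _) (hρnn _ (hymem s).1 _)
          have hfanti : Antitone f := by
            intro a b hab
            exact hC4 (y * A) hyA0 (y * x) hyxA (y * clamp a) (y * clamp b)
              (hymem a).1 (mul_le_mul_of_nonneg_left (hclampmono hab) hy0.le)
              (hρpos (y * A) hyA _ (hymem a)) (hρpos (y * A) hyA _ (hymem b))
          have hfm : Measurable f := by
            have h1 : Measurable fun s : ℝ => y * clamp s := measurable_const.mul hclampmeas
            exact ((hρmeas (y * x)).comp h1).div ((hρmeas (y * A)).comp h1)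
          calc ((fun m : Measure ℝ => m.bind (κ A))^[n+1] (Measure.dirac 0)) (Iic x)
              = ∫⁻ s, κ A s (Iic x)
                  ∂((fun m : Measure ℝ => m.bind (κ A))^[n] (Measure.dirac 0)) := by
                rw [Function.iterate_succ_apply',
                  Measure.bind_apply measurableSet_Iic (hκmeas A).aemeasurable]
            _ ≤ ∫⁻ s, ENNReal.ofReal (f s)
                  ∂((fun m : Measure ℝ => m.bind (κ A))^[n] (Measure.dirac 0)) := by
                refine lintegral_mono_ae (haem1.mono fun s hs => ?_)
                rw [hκIic A hA s hs x hxA]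
                refine ENNReal.ofReal_le_ofReal ?_
                rw [hfdef]; dsimp only
                rw [hclampeq s hs]
                have hpos1 : 0 < ρ (1 * s) (1 * A) := by
                  rw [one_mul, one_mul]; exact hρpos A hA s hs
                have hpos2 : 0 < ρ (y * s) (y * A) := hρpos (y * A) hyA (y * s)
                  ⟨mul_nonneg hy0.le hs.1, mul_le_mul_of_nonneg_left hs.2 hy0.le⟩
                have h5 := hC5 s hs.1 A hA0 x hxA 1 y one_pos hy hpos1 hpos2
                simpa [one_mul] using h5
            _ ≤ ∫⁻ s, ENNReal.ofReal (f (s / y))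
                  ∂((fun m : Measure ℝ => m.bind (κ (y * A)))^[n] (Measure.dirac 0)) := by
                refine aux_lintegral_antitone_le hy0 _ _ ih ?_ f hfanti hfnn hfm
                rw [hp1.measure_univ, hp2.measure_univ]
            _ = ∫⁻ s, κ (y * A) s (Iic (y * x))
                  ∂((fun m : Measure ℝ => m.bind (κ (y * A)))^[n] (Measure.dirac 0)) := by
                refine lintegral_congr_ae (haem2.mono fun s hs => ?_)
                dsimp only
                rw [hofReal (s / y)]
                have hmem : s / y ∈ Icc (0:ℝ) A :=
                  ⟨div_nonneg hs.1 hy0.le, (div_le_iff₀ hy0).2 (by rw [mul_comm]; exact hs.2)⟩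
                rw [hclampeq _ hmem, mul_comm y (s / y), div_mul_cancel₀ s (ne_of_gt hy0)]
            _ = ((fun m : Measure ℝ => m.bind (κ (y * A)))^[n+1] (Measure.dirac 0))
                  (Iic (y * x)) := by
                rw [Function.iterate_succ_apply',
                  Measure.bind_apply measurableSet_Iic (hκmeas (y * A)).aemeasurable]
        · -- case `x > A`
          push_neg at hxA
          obtain ⟨hp1', _⟩ := hiter A hA (n+1)
          obtain ⟨hp2', hn2'⟩ := hiter (y * A) hyA (n+1)
          have hIcc1 : ((fun m : Measure ℝ => m.bind (κ (y * A)))^[n+1] (Measure.dirac 0))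
              (Icc (0:ℝ) (y * A)) = 1 := by
            haveI := hp2'
            have h := measure_add_measure_compl
              (μ := (fun m : Measure ℝ => m.bind (κ (y * A)))^[n+1] (Measure.dirac 0))
              (measurableSet_Icc (a := (0:ℝ)) (b := y * A))
            rw [hn2', add_zero, measure_univ] at h
            exact h
          calc ((fun m : Measure ℝ => m.bind (κ A))^[n+1] (Measure.dirac 0)) (Iic x)
              ≤ 1 := prob_le_one
            _ = ((fun m : Measure ℝ => m.bind (κ (y * A)))^[n+1] (Measure.dirac 0))
                  (Icc (0:ℝ) (y * A)) := hIcc1.symm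
            _ ≤ _ := measure_mono (fun t ht =>
                le_trans ht.2 (mul_le_mul_of_nonneg_left hxA.le hy0.le))
      · -- case `x < 0`
        push_neg at hx0
        obtain ⟨_, hn1'⟩ := hiter A hA (n+1)
        have hz : ((fun m : Measure ℝ => m.bind (κ A))^[n+1] (Measure.dirac 0)) (Iic x) = 0 := by
          refine measure_mono_null (fun s hs => ?_) hn1'
          intro hmem
          simp only [mem_Iic] at hs
          linarith [hmem.1]
        rw [hz]
        exact zero_le
  -- ### stochastic domination between the quasistationary distributions
  have hd0 : ∀ B : ℝ, 0 < B → (Measure.dirac (0:ℝ)) (Icc (0:ℝ) B)ᶜ = 0 := by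
    intro B hB
    rw [Measure.dirac_apply' _ measurableSet_Icc.compl]
    simp [indicator_apply, hB.le]
  have hQdom : ∀ x : ℝ, Q A (Iic x) ≤ Q (y * A) (Iic (y * x)) := by
    intro x
    exact le_of_tendsto_of_tendsto'
      (hC1 A hA (Measure.dirac 0) (by infer_instance) (hd0 A hA0) x)
      (hC1 (y * A) hyA (Measure.dirac 0) (by infer_instance) (hd0 (y * A) hyA0) (y * x))
      (fun n => hdom n x)
  -- ### comparison of the expected values `β_A ≤ β_{yA}`
  have haeQA : ∀ᵐ s ∂(Q A), s ∈ Icc (0:ℝ) A := by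
    rw [ae_iff]; simpa [Set.compl_def] using hQsupp A hA
  have haeQyA : ∀ᵐ s ∂(Q (y * A)), s ∈ Icc (0:ℝ) (y * A) := by
    rw [ae_iff]; simpa [Set.compl_def] using hQsupp (y * A) hyA
  set f₂ : ℝ → ℝ := fun s => ρ (clamp s) A with hf₂def
  have hf₂anti : Antitone f₂ := fun a b hab =>
    hC2 A (clamp a) (clamp b) (hclampmem a).1 (hclampmono hab)
  have hf₂nn : ∀ s, 0 ≤ f₂ s := fun s => hρnn _ (hclampmem s).1 A
  have hf₂m : Measurable f₂ := (hρmeas A).comp hclampmeas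
  have e1 : ∫ s, ρ s A ∂(Q A) = (∫⁻ s, ENNReal.ofReal (f₂ s) ∂(Q A)).toReal := by
    rw [integral_eq_lintegral_of_nonneg_ae (haeQA.mono fun s hs => hρnn s hs.1 A)
      (hρmeas A).aestronglyMeasurable]
    congr 1
    refine lintegral_congr_ae (haeQA.mono fun s hs => ?_)
    rw [hf₂def]; dsimp only; rw [hclampeq s hs]
  have e2 : ∫ s, ρ s (y * A) ∂(Q (y * A))
      = (∫⁻ s, ENNReal.ofReal (ρ s (y * A)) ∂(Q (y * A))).toReal := by
    rw [integral_eq_lintegral_of_nonneg_ae (haeQyA.mono fun s hs => hρnn s hs.1 (y * A))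
      (hρmeas (y * A)).aestronglyMeasurable]
  have hlin1 : ∫⁻ s, ENNReal.ofReal (f₂ s) ∂(Q A)
      ≤ ∫⁻ s, ENNReal.ofReal (f₂ (s / y)) ∂(Q (y * A)) := by
    refine aux_lintegral_antitone_le hy0 _ _ hQdom ?_ f₂ hf₂anti hf₂nn hf₂m
    rw [measure_univ, measure_univ]
  have hlin2 : ∫⁻ s, ENNReal.ofReal (f₂ (s / y)) ∂(Q (y * A))
      ≤ ∫⁻ s, ENNReal.ofReal (ρ s (y * A)) ∂(Q (y * A)) := by
    refine lintegral_mono_ae (haeQyA.mono fun s hs => ENNReal.ofReal_le_ofReal ?_)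
    have hmem : s / y ∈ Icc (0:ℝ) A :=
      ⟨div_nonneg hs.1 hy0.le, (div_le_iff₀ hy0).2 (by rw [mul_comm]; exact hs.2)⟩
    rw [hf₂def]; dsimp only
    rw [hclampeq _ hmem]
    have h3 := hC3 (s / y) A hmem.1 hA0.le 1 y one_pos hy
    simp only [one_mul] at h3
    calc ρ (s / y) A ≤ ρ (y * (s / y)) (y * A) := h3
      _ = ρ s (y * A) := by rw [mul_comm y (s / y), div_mul_cancel₀ s (ne_of_gt hy0)]
  have hfin : ∫⁻ s, ENNReal.ofReal (ρ s (y * A)) ∂(Q (y * A)) ≠ ⊤ := by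
    refine ne_of_lt (lt_of_le_of_lt ?_ (by norm_num : (1:ℝ≥0∞) < ⊤))
    calc ∫⁻ s, ENNReal.ofReal (ρ s (y * A)) ∂(Q (y * A))
        ≤ ∫⁻ _s, (1:ℝ≥0∞) ∂(Q (y * A)) := by
          refine lintegral_mono_ae (haeQyA.mono fun s hs => ?_)
          exact ENNReal.ofReal_le_one.2 (hρle1 s hs.1 (y * A))
      _ = 1 := by simp
  have hββ : ∫ s, ρ s A ∂(Q A) ≤ ∫ s, ρ s (y * A) ∂(Q (y * A)) := by
    rw [e1, e2]
    exact ENNReal.toReal_mono hfin (le_trans hlin1 hlin2)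
  -- ### computation of the two expected exit times and conclusion
  have hρ0A : ∀ s ∈ Icc (0:ℝ) A, ∀ x : ℝ, x < 0 → ρ s x = 0 :=
    fun s hs x hx => hρzero s hs.1 x hx
  have hρ0yA : ∀ s ∈ Icc (0:ℝ) (y * A), ∀ x : ℝ, x < 0 → ρ s x = 0 :=
    fun s hs x hx => hρzero s hs.1 x hx
  rw [aux_exit_time ρ hρmeas A (Q A) (hQsupp A hA) (hInv A hA) hρ0A
      (fun s hs x => hρnn s hs.1 x) Ω P M hMmeas hM0 hMarkovM,
    aux_exit_time ρ hρmeas (y * A) (Q (y * A)) (hQsupp (y * A) hyA) (hInv (y * A) hyA) hρ0yA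
      (fun s hs x => hρnn s hs.1 x) Ω P N hNmeas hN0 hMarkovN]
  refine ENNReal.inv_le_inv.2 ?_
  exact tsub_le_tsub_left (ENNReal.ofReal_le_ofReal hββ) 1
end

section
/- If the Markov chain (M_n) with transition function ρ is started with M_0 ∼ Q_A, where Q_A is a probability measure on [0,A] invariant for the conditioned kernel (i.e. Q_A([0,x]) · ∫ ρ(s,A) dQ_A(s) = ∫ ρ(s,x) dQ_A(s) for all x ∈ [0,A]), then T_A^{Q_A} = min{ n ≥ 1 : M_n > A } is geometrically distributed: P(T_A^{Q_A} > n) = β^n for all n ≥ 0, where β = ∫_0^A ρ(s,A) dQ_A(s); consequently, if β < 1, then E[T_A^{Q_A}] = 1/(1 − β). -/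
open MeasureTheory Set
open scoped ENNReal

private lemma aux_tsum_lt (a : ℝ≥0∞) (ha : a = ⊤ ∨ ∃ m : ℕ, a = m) :
    ∑' n : ℕ, (if (n : ℝ≥0∞) < a then (1 : ℝ≥0∞) else 0) = a := by
  rcases ha with rfl | ⟨m, rfl⟩
  · have : ∀ n : ℕ, (if (n : ℝ≥0∞) < ⊤ then (1 : ℝ≥0∞) else 0) = 1 := by
      intro n; simp [ENNReal.natCast_lt_top]
    simp_rw [this]
    exact ENNReal.tsum_const_eq_top_of_ne_zero one_ne_zero
  · have h1 : ∀ n : ℕ, (if (n : ℝ≥0∞) < (m : ℝ≥0∞) then (1 : ℝ≥0∞) else 0)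
        = if n < m then 1 else 0 := by
      intro n; simp [Nat.cast_lt]
    simp_rw [h1]
    rw [tsum_eq_sum (s := Finset.range m)
      (by intro n hn; simp only [Finset.mem_range] at hn; simp [hn])]
    rw [Finset.sum_congr rfl (fun n hn => if_pos (Finset.mem_range.mp hn))]
    simp

/-- **Geometric distribution of the first exit time started at an invariant
quasistationary law.**
Let `ρ(t,x) = K t (Iic x)` be a stationary Markov transition function on `[0,∞)`
(`K t` a probability measure on `[0,∞)` for each `t`, measurably in `t`), and let
`A > 0` with `ρ(t,A) > 0` for `t ∈ [0,A]`.  Let `Q` be a probability measure on `[0,A]`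
which is invariant for the conditioned kernel, i.e.
`Q((-∞,x]) · ∫ ρ(s,A) dQ(s) = ∫ ρ(s,x) dQ(s)` for all `x ∈ [0,A]`.
Let `(M_n)` be a Markov chain with transition function `ρ` (one-step conditional CDF
from the past is `ρ(M_n, ·)`) and `M_0 ∼ Q`, on a probability space `(Ω, P)`.
Then `T = min {n ≥ 1 | M_n > A}` is geometric: `P(T > n) = β ^ n` for all `n ≥ 0`,
where `β = ∫ ρ(s,A) dQ(s)`; consequently, if `β < 1` then `E T = 1/(1-β)`. -/
theorem exit_time_geometric_from_invariant_initial_law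
    (ρ : ℝ → ℝ → ℝ)
    (K : ℝ → Measure ℝ)
    (hKmeas : Measurable K)
    (hKprob : ∀ t : ℝ, IsProbabilityMeasure (K t))
    (hKsupp : ∀ t : ℝ, K t (Set.Iio (0 : ℝ)) = 0)
    (hρK : ∀ t x : ℝ, 0 ≤ t → (K t (Set.Iic x)).toReal = ρ t x)
    (hρmeas : ∀ x : ℝ, Measurable fun s : ℝ => ρ s x)
    (A : ℝ) (hA : 0 < A)
    (hρpos : ∀ t ∈ Set.Icc (0 : ℝ) A, 0 < ρ t A)
    -- the initial law `Q`: a probability measure on `[0,A]`, invariant for the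
    -- conditioned kernel
    (Q : Measure ℝ) (hQprob : IsProbabilityMeasure Q)
    (hQsupp : Q (Set.Icc (0 : ℝ) A)ᶜ = 0)
    (hInv : ∀ x ∈ Set.Icc (0 : ℝ) A,
      (Q (Set.Iic x)).toReal * ∫ s, ρ s A ∂Q = ∫ s, ρ s x ∂Q)
    -- the Markov chain `(M_n)` with transition function `ρ` and `M_0 ∼ Q`
    (Ω : Type*) [MeasurableSpace Ω] (P : Measure Ω) (hP : IsProbabilityMeasure P)
    (M : ℕ → Ω → ℝ)
    (hMmeas : ∀ n : ℕ, Measurable (M n))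
    (hM0 : P.map (M 0) = Q)
    (hMarkov : ∀ n : ℕ, ∀ x : ℝ,
      P[fun ω => (Set.Iic x).indicator (fun _ => (1 : ℝ)) (M (n + 1) ω) |
        ⨆ i ∈ Finset.range (n + 1), MeasurableSpace.comap (M i) Real.measurableSpace]
      =ᵐ[P] fun ω => ρ (M n ω) x)
    (β : ℝ) (hβ : β = ∫ s, ρ s A ∂Q) :
    (∀ n : ℕ, P {ω | (n : ℝ≥0∞) < hitTime M A ω} = ENNReal.ofReal (β ^ n)) ∧
      (β < 1 → ∫⁻ ω, hitTime M A ω ∂P = ENNReal.ofReal (1 / (1 - β))) := by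
  have hQae : ∀ᵐ s ∂Q, s ∈ Set.Icc (0 : ℝ) A := by
    rw [ae_iff]; exact hQsupp
  have hβ0 : 0 ≤ β := by
    rw [hβ]
    apply integral_nonneg_of_ae
    filter_upwards [hQae] with s hs
    rw [← hρK s A hs.1]
    exact ENNReal.toReal_nonneg
  -- the events `E n = {M k ≤ A for 1 ≤ k ≤ n}`
  set E : ℕ → Set Ω := fun n => {ω | ∀ k, 1 ≤ k → k ≤ n → M k ω ≤ A} with hE
  set G : ℕ → MeasurableSpace Ω := fun n =>
    ⨆ i ∈ Finset.range (n + 1), MeasurableSpace.comap (M i) Real.measurableSpace with hG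
  have hGle : ∀ n, G n ≤ ‹MeasurableSpace Ω› := fun n =>
    iSup₂_le fun i _ => (hMmeas i).comap_le
  have hEG : ∀ n, MeasurableSet[G n] (E n) := by
    intro n
    have hrw : E n = ⋂ (k : ℕ) (_ : 1 ≤ k) (_ : k ≤ n), M k ⁻¹' Set.Iic A := by
      ext ω; simp [hE]
    rw [hrw]
    refine MeasurableSet.iInter fun k => MeasurableSet.iInter fun hk1 =>
      MeasurableSet.iInter fun hkn => ?_
    have h1 : MeasurableSet[MeasurableSpace.comap (M k) Real.measurableSpace]
        (M k ⁻¹' Set.Iic A) := ⟨Set.Iic A, measurableSet_Iic, rfl⟩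
    exact (le_iSup₂ (f := fun i (_ : i ∈ Finset.range (n + 1)) =>
      MeasurableSpace.comap (M i) Real.measurableSpace) k
      (Finset.mem_range.mpr (by omega))) _ h1
  have hEmeas : ∀ n, MeasurableSet (E n) := fun n => hGle n _ (hEG n)
  -- main induction
  have main : ∀ n, (P.restrict (E n)).map (M n) = (ENNReal.ofReal β) ^ n • Q := by
    intro n
    induction n with
    | zero =>
      have h0 : E 0 = Set.univ := by
        ext ω; simp only [hE, Set.mem_setOf_eq, Set.mem_univ, iff_true]
        intro k h1 h2; omega
      rw [h0, Measure.restrict_univ, pow_zero, one_smul, hM0]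
    | succ n ih =>
      haveI : SigmaFinite (P.trim (hGle n)) := by infer_instance
      have hEsucc : E (n + 1) = E n ∩ M (n + 1) ⁻¹' Set.Iic A := by
        ext ω
        simp only [hE, Set.mem_setOf_eq, Set.mem_inter_iff, Set.mem_preimage, Set.mem_Iic]
        constructor
        · intro h; exact ⟨fun k h1 h2 => h k h1 (by omega), h (n + 1) (by omega) le_rfl⟩
        · rintro ⟨h1, h2⟩ k hk1 hk2
          rcases eq_or_lt_of_le hk2 with rfl | h
          · exact h2
          · exact h1 k hk1 (by omega)
      -- key computation for a level `r ≤ A`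
      have key : ∀ r : ℝ, (P (M (n + 1) ⁻¹' Set.Iic r ∩ E n)).toReal
          = β ^ n * ∫ s, ρ s r ∂Q := by
        intro r
        have hf_eq : (fun ω => (Set.Iic r).indicator (fun _ => (1 : ℝ)) (M (n + 1) ω))
            = (M (n + 1) ⁻¹' Set.Iic r).indicator (fun _ => (1 : ℝ)) := by
          funext ω; by_cases h : M (n + 1) ω ≤ r <;> simp [Set.indicator_apply, Set.mem_preimage, h]
        have hInt : Integrable
            (fun ω => (Set.Iic r).indicator (fun _ => (1 : ℝ)) (M (n + 1) ω)) P := by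
          rw [hf_eq]
          exact (integrable_const (1 : ℝ)).indicator ((hMmeas (n + 1)) measurableSet_Iic)
        have step1 : ∫ ω in E n, ρ (M n ω) r ∂P
            = ∫ ω in E n, (Set.Iic r).indicator (fun _ => (1 : ℝ)) (M (n + 1) ω) ∂P := by
          rw [← setIntegral_condExp (hGle n) hInt (hEG n)]
          refine setIntegral_congr_ae (hEmeas n) ?_
          filter_upwards [hMarkov n r] with ω hω _
          exact hω.symm
        have step2 : ∫ ω in E n, (Set.Iic r).indicator (fun _ => (1 : ℝ)) (M (n + 1) ω) ∂P
            = (P (M (n + 1) ⁻¹' Set.Iic r ∩ E n)).toReal := by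
          rw [hf_eq, integral_indicator_const (1 : ℝ) ((hMmeas (n + 1)) measurableSet_Iic),
            measureReal_def, Measure.restrict_apply ((hMmeas (n + 1)) measurableSet_Iic)]
          simp
        have step3 : ∫ ω in E n, ρ (M n ω) r ∂P
            = ∫ s, ρ s r ∂((P.restrict (E n)).map (M n)) :=
          (integral_map (hMmeas n).aemeasurable (hρmeas r).aestronglyMeasurable).symm
        have step4 : ∫ s, ρ s r ∂((P.restrict (E n)).map (M n)) = β ^ n * ∫ s, ρ s r ∂Q := by
          rw [ih, integral_smul_measure]
          congr 1
          rw [ENNReal.toReal_pow, ENNReal.toReal_ofReal hβ0]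
        rw [← step2, ← step1, step3, step4]
      -- identify the two measures via their CDFs
      haveI : IsFiniteMeasure ((P.restrict (E (n + 1))).map (M (n + 1))) := by
        constructor
        rw [Measure.map_apply (hMmeas (n + 1)) MeasurableSet.univ]
        exact lt_of_le_of_lt (le_trans (measure_mono (Set.subset_univ _))
          (Measure.restrict_apply_le _ _)) (measure_lt_top P _)
      refine Measure.ext_of_Iic _ _ fun x => ?_
      set r := min x A with hr
      have hQIic : Q (Set.Iic r) = Q (Set.Iic x) := by
        rcases le_or_gt x A with h | h
        · rw [hr, min_eq_left h]
        · rw [hr, min_eq_right h.le]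
          refine le_antisymm (measure_mono (Set.Iic_subset_Iic.mpr h.le)) ?_
          have hsub : Set.Iic x ⊆ Set.Iic A ∪ (Set.Icc (0 : ℝ) A)ᶜ := by
            intro t ht
            rcases le_or_gt t A with h' | h'
            · exact Or.inl h'
            · exact Or.inr fun hc => absurd hc.2 (not_le.mpr h')
          calc Q (Set.Iic x) ≤ Q (Set.Iic A ∪ (Set.Icc (0 : ℝ) A)ᶜ) := measure_mono hsub
            _ ≤ Q (Set.Iic A) + Q (Set.Icc (0 : ℝ) A)ᶜ := measure_union_le _ _
            _ = Q (Set.Iic A) := by rw [hQsupp, add_zero]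
      have hρint : ∫ s, ρ s r ∂Q = β * (Q (Set.Iic x)).toReal := by
        rcases le_or_gt 0 x with hx | hx
        · have hrIcc : r ∈ Set.Icc (0 : ℝ) A := ⟨le_min hx hA.le, min_le_right _ _⟩
          rw [← hInv r hrIcc, ← hβ, hQIic, mul_comm]
        · have hrx : r = x := min_eq_left (by linarith)
          have h0 : ∫ s, ρ s r ∂Q = 0 := by
            apply integral_eq_zero_of_ae
            filter_upwards [hQae] with s hs
            rw [← hρK s r hs.1]
            have : K s (Set.Iic r) = 0 := by
              refine measure_mono_null ?_ (hKsupp s)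
              rw [hrx]; exact fun t ht => lt_of_le_of_lt ht hx
            simp [this]
          have h1 : Q (Set.Iic x) = 0 := by
            refine measure_mono_null ?_ hQsupp
            intro t ht
            exact fun hc => absurd hc.1 (not_le.mpr (lt_of_le_of_lt ht hx))
          rw [h0, h1]; simp
      -- set identity
      have hsetid : M (n + 1) ⁻¹' Set.Iic x ∩ E (n + 1) = M (n + 1) ⁻¹' Set.Iic r ∩ E n := by
        rw [hEsucc]
        ext ω
        simp only [Set.mem_inter_iff, Set.mem_preimage, Set.mem_Iic, hr, le_min_iff]
        tauto
      have hLHS : ((P.restrict (E (n + 1))).map (M (n + 1))) (Set.Iic x)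
          = P (M (n + 1) ⁻¹' Set.Iic r ∩ E n) := by
        rw [Measure.map_apply (hMmeas (n + 1)) measurableSet_Iic,
          Measure.restrict_apply ((hMmeas (n + 1)) measurableSet_Iic), hsetid]
      have hRHS : ((ENNReal.ofReal β) ^ (n + 1) • Q) (Set.Iic x)
          = (ENNReal.ofReal β) ^ (n + 1) * Q (Set.Iic x) := by
        simp [Measure.smul_apply, smul_eq_mul]
      rw [hLHS, hRHS]
      have hfin1 : P (M (n + 1) ⁻¹' Set.Iic r ∩ E n) ≠ ⊤ := measure_ne_top _ _
      have hfin2 : (ENNReal.ofReal β) ^ (n + 1) * Q (Set.Iic x) ≠ ⊤ :=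
        ENNReal.mul_ne_top (ENNReal.pow_ne_top ENNReal.ofReal_ne_top) (measure_ne_top _ _)
      rw [← ENNReal.toReal_eq_toReal_iff' hfin1 hfin2]
      rw [key r, hρint, ENNReal.toReal_mul, ENNReal.toReal_pow, ENNReal.toReal_ofReal hβ0]
      ring
  -- identification of the event `{n < T}`
  have hset : ∀ n : ℕ, {ω | (n : ℝ≥0∞) < hitTime M A ω} = E n := by
    intro n
    ext ω
    simp only [Set.mem_setOf_eq, hitTime, hE]
    constructor
    · intro h k hk1 hkn
      by_contra hgt
      push_neg at hgt
      have hle : (⨅ m ∈ {m : ℕ | 1 ≤ m ∧ A < M m ω}, (m : ℝ≥0∞)) ≤ (k : ℝ≥0∞) :=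
        iInf₂_le k ⟨hk1, hgt⟩
      have := lt_of_lt_of_le h hle
      rw [Nat.cast_lt] at this
      omega
    · intro h
      have h2 : ((n : ℝ≥0∞) + 1) ≤ ⨅ m ∈ {m : ℕ | 1 ≤ m ∧ A < M m ω}, (m : ℝ≥0∞) := by
        refine le_iInf₂ fun k hk => ?_
        obtain ⟨hk1, hkA⟩ := hk
        have hnk : n < k := by
          by_contra hc
          push_neg at hc
          exact absurd (h k hk1 hc) (not_le.mpr hkA)
        calc ((n : ℝ≥0∞) + 1) = ((n + 1 : ℕ) : ℝ≥0∞) := by push_cast; ring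
          _ ≤ (k : ℝ≥0∞) := Nat.cast_le.mpr (by omega)
      exact lt_of_lt_of_le (ENNReal.lt_add_right (ENNReal.natCast_ne_top n) one_ne_zero) h2
  have part1 : ∀ n : ℕ, P {ω | (n : ℝ≥0∞) < hitTime M A ω} = ENNReal.ofReal (β ^ n) := by
    intro n
    rw [hset n]
    have hmu := congrArg (fun μ : Measure ℝ => μ Set.univ) (main n)
    simp only [Measure.map_apply (hMmeas n) MeasurableSet.univ, Set.preimage_univ,
      Measure.restrict_apply_univ, Measure.smul_apply, smul_eq_mul] at hmu
    rw [hmu, measure_univ, mul_one, ← ENNReal.ofReal_pow hβ0]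
  refine ⟨part1, fun hβ1 => ?_⟩
  -- `T` is `ℕ∞`-valued
  have hT : ∀ ω, hitTime M A ω = ⊤ ∨ ∃ m : ℕ, hitTime M A ω = m := by
    intro ω
    rcases Set.eq_empty_or_nonempty {n : ℕ | 1 ≤ n ∧ A < M n ω} with he | hne
    · left; simp [hitTime, he]
    · right
      refine ⟨sInf {n : ℕ | 1 ≤ n ∧ A < M n ω}, le_antisymm ?_ ?_⟩
      · exact iInf₂_le _ (Nat.sInf_mem hne)
      · exact le_iInf₂ fun k hk => Nat.cast_le.mpr (Nat.sInf_le hk)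
  have hTsum : ∀ ω, hitTime M A ω
      = ∑' n : ℕ, Set.indicator {ω' | (n : ℝ≥0∞) < hitTime M A ω'}
          (fun _ => (1 : ℝ≥0∞)) ω := by
    intro ω
    rw [← aux_tsum_lt _ (hT ω)]
    exact tsum_congr fun n => by simp [Set.indicator_apply]
  rw [lintegral_congr hTsum, lintegral_tsum]
  · have hterm : ∀ n : ℕ, ∫⁻ ω, Set.indicator {ω' | (n : ℝ≥0∞) < hitTime M A ω'}
        (fun _ => (1 : ℝ≥0∞)) ω ∂P = ENNReal.ofReal (β ^ n) := by
      intro n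
      rw [lintegral_indicator_const (by rw [hset n]; exact hEmeas n) (1 : ℝ≥0∞), one_mul,
        part1 n]
    simp_rw [hterm]
    rw [← ENNReal.ofReal_tsum_of_nonneg (fun n => pow_nonneg hβ0 n)
      (summable_geometric_of_lt_one hβ0 hβ1), tsum_geometric_of_lt_one hβ0 hβ1, one_div]
  · intro n
    exact (measurable_const.indicator (by rw [hset n]; exact hEmeas n)).aemeasurable
end

section
/- (Preservation of stochastic order by the pair of conditioned kernels.) Let y ≥ 1 and A > 0, and assume conditions (C4) and (C5) hold with ρ(t, yA) > 0 and ρ(t/y, A) > 0 for all t ∈ [0, yA]. Let κ_V be the Markov kernel on [0,yA] whose transition CDF from state t is x ↦ ρ(t,x)/ρ(t,yA), and let κ_W be the Markov kernel on [0,yA] whose transition CDF from state t is x ↦ ρ(t/y, x/y)/ρ(t/y, A). If μ and ν are probability measures on [0,yA] with μ([0,x]) ≥ ν([0,x]) for all x (μ stochastically smaller than ν), then the one-step distributions satisfy (μ κ_V)([0,x]) ≥ (ν κ_W)([0,x]) for all x ∈ [0, yA], where μκ denotes the distribution ∫ κ(t, ·) dμ(t). -/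
open MeasureTheory Set

/-- A probability measure dominated in the `Iic`-sense gives at least as much mass to
any lower set. -/
lemma measure_lowerSet_le (μ ν : Measure ℝ) [IsProbabilityMeasure μ] [IsProbabilityMeasure ν]
    (hdom : ∀ x : ℝ, ν (Set.Iic x) ≤ μ (Set.Iic x)) {L : Set ℝ} (hL : IsLowerSet L) :
    ν L ≤ μ L := by
  rcases eq_empty_or_nonempty L with rfl | hne
  · simp
  by_cases hbdd : BddAbove L
  · set c := sSup L with hc
    by_cases hcL : c ∈ L
    · have hLe : L = Iic c := subset_antisymm (fun a ha => le_csSup hbdd ha)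
        (fun a ha => hL ha hcL)
      rw [hLe]; exact hdom c
    · have hLe : L = Iio c := by
        apply subset_antisymm
        · intro a ha
          refine lt_of_le_of_ne (le_csSup hbdd ha) fun h => hcL ?_
          rw [hc, ← h]; exact ha
        · intro a ha
          obtain ⟨b, hb, hab⟩ := exists_lt_of_lt_csSup hne ha
          exact hL hab.le hb
      have hU : Iio c = ⋃ n : ℕ, Iic (c - 1 / (n + 1)) := by
        ext a
        simp only [mem_Iio, mem_iUnion, mem_Iic]
        constructor
        · intro h
          obtain ⟨n, hn⟩ := exists_nat_one_div_lt (sub_pos.mpr h)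
          exact ⟨n, by linarith [hn]⟩
        · rintro ⟨n, hn⟩
          have hp : (0:ℝ) < 1 / (n + 1) := by positivity
          linarith
      have hmono : Monotone fun n : ℕ => Iic (c - 1 / ((n:ℝ) + 1)) := by
        intro m n hmn
        apply Iic_subset_Iic.mpr
        have h1 : (1:ℝ) / ((n:ℝ) + 1) ≤ 1 / ((m:ℝ) + 1) := by
          apply one_div_le_one_div_of_le (by positivity)
          exact_mod_cast by omega
        linarith
      rw [hLe, hU, hmono.directed_le.measure_iUnion,
        hmono.directed_le.measure_iUnion]
      exact iSup_mono fun n => hdom _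
  · have hLe : L = univ := by
      ext a
      simp only [mem_univ, iff_true]
      obtain ⟨b, hb, hab⟩ := not_bddAbove_iff.mp hbdd a
      exact hL hab.le hb
    rw [hLe, measure_univ, measure_univ]

/-- Stochastic domination gives comparison of integrals of antitone nonnegative functions. -/
lemma lintegral_antitone_le (μ ν : Measure ℝ) [IsProbabilityMeasure μ] [IsProbabilityMeasure ν]
    (hdom : ∀ x : ℝ, ν (Set.Iic x) ≤ μ (Set.Iic x)) (g : ℝ → ℝ)
    (hg : Antitone g) (hg0 : ∀ t, 0 ≤ g t) :
    ∫⁻ t, ENNReal.ofReal (g t) ∂ν ≤ ∫⁻ t, ENNReal.ofReal (g t) ∂μ := by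
  rw [lintegral_eq_lintegral_meas_lt ν (Filter.Eventually.of_forall hg0)
      hg.measurable.aemeasurable,
    lintegral_eq_lintegral_meas_lt μ (Filter.Eventually.of_forall hg0)
      hg.measurable.aemeasurable]
  refine lintegral_mono fun s => ?_
  exact measure_lowerSet_le μ ν hdom fun a b hba ha => lt_of_lt_of_le ha (hg hba)

/-- **Preservation of stochastic order by the pair of conditioned kernels.**
Let `y ≥ 1`, `A > 0`, and let `ρ` satisfy (C4) and (C5), with `ρ(t,yA) > 0` and
`ρ(t/y, A) > 0` for all `t ∈ [0,yA]`.  Let `κV` be the Markov kernel on `[0,yA]` whose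
transition CDF from state `t` is `x ↦ ρ(t,x)/ρ(t,yA)`, and `κW` the Markov kernel on
`[0,yA]` whose transition CDF from state `t` is `x ↦ ρ(t/y, x/y)/ρ(t/y, A)`.
If `μ` and `ν` are probability measures on `[0,yA]` with `μ((-∞,x]) ≥ ν((-∞,x])` for
all `x` (i.e. `μ` stochastically smaller than `ν`), then the one-step distributions
satisfy `(μ κV)((-∞,x]) ≥ (ν κW)((-∞,x])` for all `x ∈ [0,yA]`. -/
theorem one_step_preservation_of_stochastic_order
    (ρ : ℝ → ℝ → ℝ)
    (hρ01 : ∀ t x : ℝ, 0 ≤ ρ t x ∧ ρ t x ≤ 1)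
    (hρmono : ∀ t : ℝ, Monotone (ρ t))
    -- (C4)
    (hC4 : ∀ B : ℝ, 0 < B → ∀ x : ℝ, x ≤ B → ∀ s s' : ℝ, 0 ≤ s → s ≤ s' →
      0 < ρ s B → 0 < ρ s' B → ρ s' x / ρ s' B ≤ ρ s x / ρ s B)
    -- (C5)
    (hC5 : ∀ s : ℝ, 0 ≤ s → ∀ B : ℝ, 0 < B → ∀ x : ℝ, x ≤ B →
      ∀ t t' : ℝ, 0 < t → t ≤ t' →
      0 < ρ (t * s) (t * B) → 0 < ρ (t' * s) (t' * B) →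
      ρ (t * s) (t * x) / ρ (t * s) (t * B) ≤ ρ (t' * s) (t' * x) / ρ (t' * s) (t' * B))
    (y A : ℝ) (hy : 1 ≤ y) (hA : 0 < A)
    (hposV : ∀ t ∈ Set.Icc (0 : ℝ) (y * A), 0 < ρ t (y * A))
    (hposW : ∀ t ∈ Set.Icc (0 : ℝ) (y * A), 0 < ρ (t / y) A)
    (κV κW : ℝ → Measure ℝ)
    (hκVmeas : Measurable κV) (hκWmeas : Measurable κW)
    (hκVprob : ∀ t, IsProbabilityMeasure (κV t))
    (hκWprob : ∀ t, IsProbabilityMeasure (κW t))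
    (hκVsupp : ∀ t ∈ Set.Icc (0 : ℝ) (y * A), κV t (Set.Icc (0 : ℝ) (y * A))ᶜ = 0)
    (hκWsupp : ∀ t ∈ Set.Icc (0 : ℝ) (y * A), κW t (Set.Icc (0 : ℝ) (y * A))ᶜ = 0)
    (hκVcdf : ∀ t ∈ Set.Icc (0 : ℝ) (y * A), ∀ x ∈ Set.Icc (0 : ℝ) (y * A),
      (κV t (Set.Iic x)).toReal = ρ t x / ρ t (y * A))
    (hκWcdf : ∀ t ∈ Set.Icc (0 : ℝ) (y * A), ∀ x ∈ Set.Icc (0 : ℝ) (y * A),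
      (κW t (Set.Iic x)).toReal = ρ (t / y) (x / y) / ρ (t / y) A)
    (μ ν : Measure ℝ)
    (hμprob : IsProbabilityMeasure μ) (hνprob : IsProbabilityMeasure ν)
    (hμsupp : μ (Set.Icc (0 : ℝ) (y * A))ᶜ = 0)
    (hνsupp : ν (Set.Icc (0 : ℝ) (y * A))ᶜ = 0)
    -- `μ` stochastically smaller than `ν`
    (hdom : ∀ x : ℝ, ν (Set.Iic x) ≤ μ (Set.Iic x)) :
    ∀ x ∈ Set.Icc (0 : ℝ) (y * A), ν.bind κW (Set.Iic x) ≤ μ.bind κV (Set.Iic x) := by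

  intro x hx
  haveI := hμprob; haveI := hνprob
  have hyA : 0 < y * A := by positivity
  have hy0 : 0 < y := lt_of_lt_of_le one_pos hy
  set S := Set.Icc (0 : ℝ) (y * A) with hS
  -- the clamping map
  set c : ℝ → ℝ := fun t => max 0 (min t (y * A)) with hcdef
  have hcmem : ∀ t, c t ∈ S := fun t =>
    ⟨le_max_left _ _, max_le hyA.le (min_le_right _ _)⟩
  have hcid : ∀ t ∈ S, c t = t := by
    intro t ht
    simp only [hcdef]
    rw [min_eq_left ht.2, max_eq_right ht.1]
  have hcmono : Monotone c := fun a b hab =>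
    max_le_max le_rfl (min_le_min_right _ hab)
  -- g and h
  set g : ℝ → ℝ := fun t => ρ (c t) x / ρ (c t) (y * A) with hgdef
  set h : ℝ → ℝ := fun t => ρ (c t / y) (x / y) / ρ (c t / y) A with hhdef
  have hganti : Antitone g := by
    intro a b hab
    exact hC4 (y * A) hyA x hx.2 (c a) (c b) (hcmem a).1 (hcmono hab)
      (hposV _ (hcmem a)) (hposV _ (hcmem b))
  have hg0 : ∀ t, 0 ≤ g t := fun t =>
    div_nonneg (hρ01 _ _).1 (hρ01 _ _).1
  -- pointwise comparison h ≤ g on S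
  have hhg : ∀ t ∈ S, h t ≤ g t := by
    intro t ht
    have h1 : (0:ℝ) ≤ t / y := div_nonneg ht.1 hy0.le
    have h2 : x / y ≤ A := by
      rw [div_le_iff₀ hy0]
      calc x ≤ y * A := hx.2
      _ = A * y := mul_comm _ _
    have key := hC5 (t / y) h1 A hA (x / y) h2 1 y one_pos hy
    simp only [one_mul] at key
    have e1 : y * (t / y) = t := by field_simp
    have e2 : y * (x / y) = x := by field_simp
    rw [e1, e2] at key
    have := key (hposW t ht) (hposV t ht)
    simp only [hgdef, hhdef, hcid t ht]
    exact this
  -- rewrite the bind applications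
  have hmV : Measurable fun t => κV t (Set.Iic x) :=
    (Measure.measurable_coe measurableSet_Iic).comp hκVmeas
  have hmW : Measurable fun t => κW t (Set.Iic x) :=
    (Measure.measurable_coe measurableSet_Iic).comp hκWmeas
  rw [Measure.bind_apply measurableSet_Iic hκWmeas.aemeasurable,
    Measure.bind_apply measurableSet_Iic hκVmeas.aemeasurable]
  have haeμ : ∀ᵐ t ∂μ, t ∈ S := by
    rw [MeasureTheory.ae_iff]
    exact hμsupp
  have haeν : ∀ᵐ t ∂ν, t ∈ S := by
    rw [MeasureTheory.ae_iff]
    exact hνsupp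
  calc ∫⁻ t, κW t (Set.Iic x) ∂ν ≤ ∫⁻ t, ENNReal.ofReal (g t) ∂ν := by
        refine lintegral_mono_ae ?_
        filter_upwards [haeν] with t ht
        have hfin : κW t (Set.Iic x) ≠ ⊤ := measure_ne_top _ _
        have : κW t (Set.Iic x) = ENNReal.ofReal (h t) := by
          rw [← ENNReal.ofReal_toReal hfin, hκWcdf t ht x hx]
          simp only [hhdef, hcid t ht]
        rw [this]
        exact ENNReal.ofReal_le_ofReal (hhg t ht)
    _ ≤ ∫⁻ t, ENNReal.ofReal (g t) ∂μ :=
        lintegral_antitone_le μ ν hdom g hganti hg0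
    _ = ∫⁻ t, κV t (Set.Iic x) ∂μ := by
        refine lintegral_congr_ae ?_
        filter_upwards [haeμ] with t ht
        have hfin : κV t (Set.Iic x) ≠ ⊤ := measure_ne_top _ _
        rw [← ENNReal.ofReal_toReal hfin, hκVcdf t ht x hx]
        simp only [hgdef, hcid t ht]
end

section
/- (Stochastic domination of conditioned chains at every epoch.) Let y ≥ 1 and A > 0, and assume conditions (C4) and (C5) hold with ρ(t, yA) > 0 and ρ(t/y, A) > 0 for all t ∈ [0, yA]. Let (V_n) be the Markov chain on [0,yA] with transition CDF x ↦ ρ(t,x)/ρ(t,yA) from state t, let (U_n) be the Markov chain on [0,A] with transition CDF x ↦ ρ(t,x)/ρ(t,A) from state t, and set W_n = y·U_n. If V_0 and W_0 = y·U_0 have the same distribution, then for every n ≥ 0 and every x, P(V_n ≤ x) ≥ P(W_n ≤ x), i.e. V_n is stochastically smaller than W_n. -/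
open MeasureTheory Set
open scoped ENNReal

lemma downset_measure_le_aux (μ ν : Measure ℝ) [IsProbabilityMeasure μ] [IsProbabilityMeasure ν]
    (h : ∀ x, ν (Iic x) ≤ μ (Iic x)) (S : Set ℝ)
    (hS : ∀ ⦃a b : ℝ⦄, a ≤ b → b ∈ S → a ∈ S) : ν S ≤ μ S := by
  rcases eq_empty_or_nonempty S with rfl | hne
  · simp
  by_cases huniv : S = univ
  · subst huniv; simp
  obtain ⟨b, hb⟩ : ∃ b, b ∉ S := by
    by_contra hcon
    push_neg at hcon
    exact huniv (eq_univ_of_forall hcon)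
  have hbdd : BddAbove S := ⟨b, fun x hx => by
    by_contra hxb
    exact hb (hS (le_of_not_ge hxb) hx)⟩
  set c := sSup S with hc
  by_cases hcS : c ∈ S
  · have hSeq : S = Iic c := subset_antisymm (fun x hx => le_csSup hbdd hx) (fun x hx => hS hx hcS)
    rw [hSeq]; exact h c
  · have hSeq : S = Iio c := by
      ext x
      constructor
      · intro hx
        refine lt_of_le_of_ne (le_csSup hbdd hx) ?_
        rintro rfl
        exact hcS hx
      · intro hx
        obtain ⟨s, hsS, hxs⟩ := exists_lt_of_lt_csSup hne hx
        exact hS hxs.le hsS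
    have hU : Iio c = ⋃ n : ℕ, Iic (c - 1/(n+1)) := by
      ext x
      simp only [mem_Iio, mem_iUnion, mem_Iic]
      constructor
      · intro hx
        obtain ⟨n, hn⟩ := exists_nat_one_div_lt (sub_pos.mpr hx)
        exact ⟨n, by linarith⟩
      · rintro ⟨n, hn⟩
        have h0 : 0 < 1/((n:ℝ)+1) := by positivity
        linarith
    have hmono : Monotone (fun n : ℕ => Iic (c - 1/((n:ℝ)+1))) := by
      intro m n hmn
      apply Iic_subset_Iic.mpr
      have hmn' : (m:ℝ) ≤ n := Nat.cast_le.mpr hmn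
      have : 1/((n:ℝ)+1) ≤ 1/((m:ℝ)+1) := by
        apply one_div_le_one_div_of_le (by positivity)
        linarith
      linarith
    rw [hSeq, hU, hmono.directed_le.measure_iUnion, hmono.directed_le.measure_iUnion]
    exact iSup_mono fun n => h _

lemma antitone_lintegral_le (μ ν : Measure ℝ) [IsProbabilityMeasure μ] [IsProbabilityMeasure ν]
    (h : ∀ x, ν (Iic x) ≤ μ (Iic x)) (g : ℝ → ℝ≥0∞) (hg : Antitone g) (hg1 : ∀ t, g t ≤ 1) :
    ∫⁻ t, g t ∂ν ≤ ∫⁻ t, g t ∂μ := by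
  set f : ℝ → ℝ := fun t => (g t).toReal with hf
  have hgt : ∀ t, g t ≠ ⊤ := fun t => (lt_of_le_of_lt (hg1 t) ENNReal.one_lt_top).ne
  have hfanti : Antitone f := fun a b hab => ENNReal.toReal_mono (hgt a) (hg hab)
  have hfm : Measurable f := hfanti.measurable
  have hofg : ∀ t, ENNReal.ofReal (f t) = g t := fun t => ENNReal.ofReal_toReal (hgt t)
  have hnn : ∀ᵐ t ∂μ, 0 ≤ f t := Filter.Eventually.of_forall fun t => ENNReal.toReal_nonneg
  have hnn' : ∀ᵐ t ∂ν, 0 ≤ f t := Filter.Eventually.of_forall fun t => ENNReal.toReal_nonneg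
  have hdown : ∀ t : ℝ, ∀ ⦃a b : ℝ⦄, a ≤ b → b ∈ {x | t < f x} → a ∈ {x | t < f x} :=
    fun t a b hab hb => lt_of_lt_of_le hb (hfanti hab)
  calc ∫⁻ t, g t ∂ν = ∫⁻ t, ENNReal.ofReal (f t) ∂ν := by simp only [hofg]
    _ = ∫⁻ t in Ioi 0, ν {a | t < f a} :=
        lintegral_eq_lintegral_meas_lt ν hnn' hfm.aemeasurable
    _ ≤ ∫⁻ t in Ioi 0, μ {a | t < f a} :=
        lintegral_mono fun t => downset_measure_le_aux μ ν h _ (hdown t)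
    _ = ∫⁻ t, ENNReal.ofReal (f t) ∂μ :=
        (lintegral_eq_lintegral_meas_lt μ hnn hfm.aemeasurable).symm
    _ = ∫⁻ t, g t ∂μ := by simp only [hofg]

/-- **Stochastic domination of conditioned chains at every epoch.**
Let `y ≥ 1`, `A > 0`, and let `ρ` satisfy (C4) and (C5), with `ρ(t,yA) > 0` and
`ρ(t/y, A) > 0` for all `t ∈ [0,yA]`.  Let `(V_n)` be the Markov chain on `[0,yA]` whose
transition kernel `κV` from state `t` has CDF `x ↦ ρ(t,x)/ρ(t,yA)`, let `(U_n)` be the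
Markov chain on `[0,A]` whose transition kernel `κU` from state `t` has CDF
`x ↦ ρ(t,x)/ρ(t,A)`, and set `W_n = y·U_n`.  The law of `V_n` (resp. `U_n`) is the
`n`-fold iterate of `m ↦ m.bind κV` (resp. `m ↦ m.bind κU`) applied to the initial law.
If `V_0` and `W_0 = y·U_0` have the same distribution, then for every `n ≥ 0` and every
`x`, `P(V_n ≤ x) ≥ P(W_n ≤ x)`, i.e. `V_n` is stochastically smaller than `W_n`. -/
theorem conditioned_chains_stochastic_domination
    (ρ : ℝ → ℝ → ℝ)
    (hρ01 : ∀ t x : ℝ, 0 ≤ ρ t x ∧ ρ t x ≤ 1)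
    (hρmono : ∀ t : ℝ, Monotone (ρ t))
    -- (C4)
    (hC4 : ∀ B : ℝ, 0 < B → ∀ x : ℝ, x ≤ B → ∀ s s' : ℝ, 0 ≤ s → s ≤ s' →
      0 < ρ s B → 0 < ρ s' B → ρ s' x / ρ s' B ≤ ρ s x / ρ s B)
    -- (C5)
    (hC5 : ∀ s : ℝ, 0 ≤ s → ∀ B : ℝ, 0 < B → ∀ x : ℝ, x ≤ B →
      ∀ t t' : ℝ, 0 < t → t ≤ t' →
      0 < ρ (t * s) (t * B) → 0 < ρ (t' * s) (t' * B) →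
      ρ (t * s) (t * x) / ρ (t * s) (t * B) ≤ ρ (t' * s) (t' * x) / ρ (t' * s) (t' * B))
    (y A : ℝ) (hy : 1 ≤ y) (hA : 0 < A)
    (hposV : ∀ t ∈ Set.Icc (0 : ℝ) (y * A), 0 < ρ t (y * A))
    (hposW : ∀ t ∈ Set.Icc (0 : ℝ) (y * A), 0 < ρ (t / y) A)
    -- the conditioned kernel of the `V` chain (level `yA`)
    (κV : ℝ → Measure ℝ)
    (hκVmeas : Measurable κV)
    (hκVprob : ∀ t, IsProbabilityMeasure (κV t))
    (hκVsupp : ∀ t ∈ Set.Icc (0 : ℝ) (y * A), κV t (Set.Icc (0 : ℝ) (y * A))ᶜ = 0)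
    (hκVcdf : ∀ t ∈ Set.Icc (0 : ℝ) (y * A), ∀ x ∈ Set.Icc (0 : ℝ) (y * A),
      (κV t (Set.Iic x)).toReal = ρ t x / ρ t (y * A))
    -- the conditioned kernel of the `U` chain (level `A`)
    (κU : ℝ → Measure ℝ)
    (hκUmeas : Measurable κU)
    (hκUprob : ∀ t, IsProbabilityMeasure (κU t))
    (hκUsupp : ∀ t ∈ Set.Icc (0 : ℝ) A, κU t (Set.Icc (0 : ℝ) A)ᶜ = 0)
    (hκUcdf : ∀ t ∈ Set.Icc (0 : ℝ) A, ∀ x ∈ Set.Icc (0 : ℝ) A,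
      (κU t (Set.Iic x)).toReal = ρ t x / ρ t A)
    -- initial distributions: `V_0` and `W_0 = y·U_0` have the same distribution
    (μV μU : Measure ℝ)
    (hμVprob : IsProbabilityMeasure μV) (hμUprob : IsProbabilityMeasure μU)
    (hμUsupp : μU (Set.Icc (0 : ℝ) A)ᶜ = 0)
    (hinit : μV = μU.map (fun u : ℝ => y * u)) :
    ∀ n : ℕ, ∀ x : ℝ,
      (((fun m : Measure ℝ => m.bind κU)^[n] μU).map (fun u : ℝ => y * u)) (Set.Iic x)
        ≤ ((fun m : Measure ℝ => m.bind κV)^[n] μV) (Set.Iic x) := by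
  have hy0 : (0:ℝ) < y := lt_of_lt_of_le one_pos hy
  have hyA : (0:ℝ) < y * A := mul_pos hy0 hA
  have hymeas : Measurable (fun u : ℝ => y * u) := measurable_const_mul y
  -- preimage facts
  have hpreIcc : (fun u : ℝ => y * u) ⁻¹' (Icc (0:ℝ) (y*A)) = Icc (0:ℝ) A := by
    ext u
    simp only [mem_preimage, mem_Icc]
    constructor
    · rintro ⟨h1, h2⟩
      exact ⟨nonneg_of_mul_nonneg_right h1 hy0, (mul_le_mul_iff_right₀ hy0).mp h2⟩
    · rintro ⟨h1, h2⟩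
      exact ⟨mul_nonneg hy0.le h1, (mul_le_mul_iff_right₀ hy0).mpr h2⟩
  have hpreIic : ∀ x : ℝ, (fun u : ℝ => y * u) ⁻¹' (Iic x) = Iic (x / y) := by
    intro x
    ext u
    simp only [mem_preimage, mem_Iic, le_div_iff₀ hy0, mul_comm]
  -- pointwise kernel comparison on the support
  have hstep : ∀ x : ℝ, ∀ w ∈ Icc (0:ℝ) (y*A),
      κU (w/y) (Iic (x/y)) ≤ κV w (Iic x) := by
    intro x w hw
    have hwu : w / y ∈ Icc (0:ℝ) A :=
      ⟨div_nonneg hw.1 hy0.le, by rw [div_le_iff₀ hy0]; linarith [hw.2]⟩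
    by_cases hx0 : x < 0
    · have hsub : Iic (x/y) ⊆ (Icc (0:ℝ) A)ᶜ := by
        intro t ht
        simp only [mem_compl_iff, mem_Icc, not_and, not_le]
        intro ht0
        have hneg : x / y < 0 := div_neg_of_neg_of_pos hx0 hy0
        have := mem_Iic.mp ht
        linarith
      have := measure_mono_null hsub (hκUsupp _ hwu)
      rw [this]; exact zero_le
    by_cases hxA : x ≤ y * A
    · -- main case via C5
      push_neg at hx0
      have hx : x ∈ Icc (0:ℝ) (y*A) := ⟨hx0, hxA⟩
      have hxu : x / y ∈ Icc (0:ℝ) A :=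
        ⟨div_nonneg hx0 hy0.le, by rw [div_le_iff₀ hy0]; linarith⟩
      have e1 : y * (w / y) = w := by field_simp
      have e2 : y * (x / y) = x := by field_simp
      have pos1 : 0 < ρ (1 * (w/y)) (1 * A) := by
        rw [one_mul, one_mul]; exact hposW w hw
      have pos2 : 0 < ρ (y * (w/y)) (y * A) := by
        rw [e1]; exact hposV w hw
      have hkey := hC5 (w/y) hwu.1 A hA (x/y) hxu.2 1 y one_pos hy pos1 pos2
      rw [one_mul, one_mul, one_mul, e1, e2] at hkey
      rw [← ENNReal.toReal_le_toReal (measure_ne_top _ _) (measure_ne_top _ _),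
        hκUcdf (w/y) hwu (x/y) hxu, hκVcdf w hw x hx]
      exact hkey
    · -- x > yA : RHS is 1
      push_neg at hxA
      have hcompl : κV w (Iic x)ᶜ = 0 := by
        apply measure_mono_null _ (hκVsupp w hw)
        intro t ht
        simp only [mem_compl_iff, mem_Iic, not_le] at ht
        simp only [mem_compl_iff, mem_Icc, not_and, not_le]
        intro; linarith
      have h1 : κV w (Iic x) = 1 := (prob_compl_eq_zero_iff measurableSet_Iic).mp hcompl
      rw [h1]
      exact prob_le_one
  -- stochastic monotonicity of κV on the support
  have hmonoV : ∀ x : ℝ, ∀ s s' : ℝ, s ∈ Icc (0:ℝ) (y*A) → s' ∈ Icc (0:ℝ) (y*A) → s ≤ s' →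
      κV s' (Iic x) ≤ κV s (Iic x) := by
    intro x s s' hs hs' hss'
    by_cases hx0 : x < 0
    · have hsub : Iic x ⊆ (Icc (0:ℝ) (y*A))ᶜ := by
        intro t ht
        simp only [mem_compl_iff, mem_Icc, not_and, not_le]
        intro; linarith [mem_Iic.mp ht]
      rw [measure_mono_null hsub (hκVsupp s' hs')]
      exact zero_le
    by_cases hxA : x ≤ y * A
    · push_neg at hx0
      have hx : x ∈ Icc (0:ℝ) (y*A) := ⟨hx0, hxA⟩
      have hkey := hC4 (y*A) hyA x hxA s s' hs.1 hss' (hposV s hs) (hposV s' hs')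
      rw [← ENNReal.toReal_le_toReal (measure_ne_top _ _) (measure_ne_top _ _),
        hκVcdf s' hs' x hx, hκVcdf s hs x hx]
      exact hkey
    · push_neg at hxA
      have hcompl : κV s (Iic x)ᶜ = 0 := by
        apply measure_mono_null _ (hκVsupp s hs)
        intro t ht
        simp only [mem_compl_iff, mem_Iic, not_le] at ht
        simp only [mem_compl_iff, mem_Icc, not_and, not_le]
        intro; linarith
      rw [(prob_compl_eq_zero_iff measurableSet_Iic).mp hcompl]
      exact prob_le_one
  -- the induction
  set FV : Measure ℝ → Measure ℝ := fun m => m.bind κV with hFV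
  set FU : Measure ℝ → Measure ℝ := fun m => m.bind κU with hFU
  suffices key : ∀ n : ℕ, (FV^[n] μV) (Icc (0:ℝ) (y*A))ᶜ = 0 ∧ (FU^[n] μU) (Icc (0:ℝ) A)ᶜ = 0 ∧
      IsProbabilityMeasure (FV^[n] μV) ∧ IsProbabilityMeasure (FU^[n] μU) ∧
      ∀ x : ℝ, ((FU^[n] μU).map (fun u : ℝ => y * u)) (Iic x) ≤ (FV^[n] μV) (Iic x) by
    exact fun n x => (key n).2.2.2.2 x
  intro n
  induction n with
  | zero =>
    refine ⟨?_, hμUsupp, hμVprob, hμUprob, ?_⟩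
    · simp only [Function.iterate_zero, id_eq]
      rw [hinit, Measure.map_apply hymeas (measurableSet_Icc.compl),
        preimage_compl, hpreIcc]
      exact hμUsupp
    · intro x
      simp only [Function.iterate_zero, id_eq]
      rw [hinit]
  | succ n ih =>
    obtain ⟨hV0, hU0, hVp, hUp, hle⟩ := ih
    set mV := FV^[n] μV with hmV
    set mU := FU^[n] μU with hmU
    haveI : IsProbabilityMeasure mV := hVp
    haveI : IsProbabilityMeasure mU := hUp
    rw [Function.iterate_succ_apply', Function.iterate_succ_apply']
    have hbindV : ∀ s : Set ℝ, MeasurableSet s → (FV mV) s = ∫⁻ t, κV t s ∂mV := by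
      intro s hs
      exact Measure.bind_apply hs hκVmeas.aemeasurable
    have hbindU : ∀ s : Set ℝ, MeasurableSet s → (FU mU) s = ∫⁻ t, κU t s ∂mU := by
      intro s hs
      exact Measure.bind_apply hs hκUmeas.aemeasurable
    -- new supports
    have hV0' : (FV mV) (Icc (0:ℝ) (y*A))ᶜ = 0 := by
      rw [hbindV _ measurableSet_Icc.compl]
      have hae : ∀ᵐ t ∂mV, κV t (Icc (0:ℝ) (y*A))ᶜ = 0 := by
        rw [ae_iff]
        apply measure_mono_null _ hV0
        intro t ht
        simp only [mem_setOf_eq] at ht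
        simp only [mem_compl_iff]
        intro hmem
        exact ht (hκVsupp t hmem)
      calc ∫⁻ t, κV t (Icc (0:ℝ) (y*A))ᶜ ∂mV = ∫⁻ _, 0 ∂mV := lintegral_congr_ae hae
        _ = 0 := lintegral_zero
    have hU0' : (FU mU) (Icc (0:ℝ) A)ᶜ = 0 := by
      rw [hbindU _ measurableSet_Icc.compl]
      have hae : ∀ᵐ t ∂mU, κU t (Icc (0:ℝ) A)ᶜ = 0 := by
        rw [ae_iff]
        apply measure_mono_null _ hU0
        intro t ht
        simp only [mem_setOf_eq] at ht
        simp only [mem_compl_iff]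
        intro hmem
        exact ht (hκUsupp t hmem)
      calc ∫⁻ t, κU t (Icc (0:ℝ) A)ᶜ ∂mU = ∫⁻ _, 0 ∂mU := lintegral_congr_ae hae
        _ = 0 := lintegral_zero
    -- probability measures
    have hVp' : IsProbabilityMeasure (FV mV) := by
      constructor
      rw [hbindV _ MeasurableSet.univ]
      calc ∫⁻ t, κV t univ ∂mV = ∫⁻ _, 1 ∂mV := lintegral_congr fun t => (hκVprob t).measure_univ
        _ = 1 := by simp
    have hUp' : IsProbabilityMeasure (FU mU) := by
      constructor
      rw [hbindU _ MeasurableSet.univ]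
      calc ∫⁻ t, κU t univ ∂mU = ∫⁻ _, 1 ∂mU := lintegral_congr fun t => (hκUprob t).measure_univ
        _ = 1 := by simp
    refine ⟨hV0', hU0', hVp', hUp', ?_⟩
    intro x
    set ν : Measure ℝ := mU.map (fun u : ℝ => y * u) with hν
    haveI : IsProbabilityMeasure ν := Measure.isProbabilityMeasure_map hymeas.aemeasurable
    have hν0 : ν (Icc (0:ℝ) (y*A))ᶜ = 0 := by
      rw [hν, Measure.map_apply hymeas (measurableSet_Icc.compl), preimage_compl, hpreIcc]
      exact hU0
    -- LHS as integral over ν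
    have hglam : Measurable (fun w : ℝ => κU (w/y) (Iic (x/y))) :=
      (Measure.measurable_coe measurableSet_Iic).comp (hκUmeas.comp (measurable_id.div_const y))
    have hLHS : ((FU mU).map (fun u : ℝ => y * u)) (Iic x)
        = ∫⁻ w, κU (w/y) (Iic (x/y)) ∂ν := by
      rw [Measure.map_apply hymeas measurableSet_Iic, hpreIic x,
        hbindU _ measurableSet_Iic, hν, lintegral_map hglam hymeas]
      apply lintegral_congr
      intro u
      rw [mul_div_cancel_left₀ u hy0.ne']
    -- RHS as integral over mV
    have hRHS : (FV mV) (Iic x) = ∫⁻ t, κV t (Iic x) ∂mV := hbindV _ measurableSet_Iic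
    -- clamped antitone version of t ↦ κV t (Iic x)
    set cl : ℝ → ℝ := fun t => max 0 (min t (y*A)) with hcl
    have hclmem : ∀ t, cl t ∈ Icc (0:ℝ) (y*A) :=
      fun t => ⟨le_max_left _ _, max_le hyA.le (min_le_right _ _)⟩
    have hclid : ∀ t ∈ Icc (0:ℝ) (y*A), cl t = t := by
      intro t ht
      rw [hcl]
      simp only
      rw [min_eq_left ht.2, max_eq_right ht.1]
    have hclmono : Monotone cl := fun a b hab =>
      max_le_max le_rfl (min_le_min hab le_rfl)
    set g : ℝ → ℝ≥0∞ := fun t => κV (cl t) (Iic x) with hg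
    have hganti : Antitone g := fun a b hab =>
      hmonoV x (cl a) (cl b) (hclmem a) (hclmem b) (hclmono hab)
    have hg1 : ∀ t, g t ≤ 1 := fun t => prob_le_one
    -- chain of inequalities
    calc ((FU mU).map (fun u : ℝ => y * u)) (Iic x)
        = ∫⁻ w, κU (w/y) (Iic (x/y)) ∂ν := hLHS
      _ ≤ ∫⁻ w, κV w (Iic x) ∂ν := by
          apply lintegral_mono_ae
          rw [ae_iff]
          apply measure_mono_null _ hν0
          intro w hwbad
          simp only [mem_setOf_eq, not_le] at hwbad
          simp only [mem_compl_iff]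
          intro hmem
          exact absurd (hstep x w hmem) (not_le.mpr hwbad)
      _ = ∫⁻ w, g w ∂ν := by
          apply lintegral_congr_ae
          rw [Filter.EventuallyEq, ae_iff]
          apply measure_mono_null _ hν0
          intro w hwbad
          simp only [mem_setOf_eq] at hwbad
          simp only [mem_compl_iff]
          intro hmem
          exact hwbad (by rw [hg]; simp only; rw [hclid w hmem])
      _ ≤ ∫⁻ t, g t ∂mV := antitone_lintegral_le mV ν hle g hganti hg1
      _ = ∫⁻ t, κV t (Iic x) ∂mV := by
          apply lintegral_congr_ae
          rw [Filter.EventuallyEq, ae_iff]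
          apply measure_mono_null _ hV0
          intro t htbad
          simp only [mem_setOf_eq] at htbad
          simp only [mem_compl_iff]
          intro hmem
          exact htbad (by rw [hg]; simp only; rw [hclid t hmem])
      _ = (FV mV) (Iic x) := hRHS.symm
end

section
/- (Key integral inequality.) Let A > 0 and y ≥ 1. Let Q_A and Q_{yA} be probability measures on [0,A] and [0,yA] respectively with Q_A({0}) = Q_{yA}({0}) = 0, whose CDFs satisfy Q_{yA}(yx) ≥ Q_A(x) for all x ∈ [0,A]. Suppose s ↦ ρ(s, yA) is nonincreasing on [0, yA] and s ↦ ρ(s, A) is nonincreasing on [0, A] (condition (C2)), and that ρ(yt, yA) ≥ ρ(t, A) for all t ∈ [0, A] (an instance of condition (C3)), where each ρ(·,B) takes values in [0,1] and is measurable. Then ∫_0^{yA} ρ(s, yA) dQ_{yA}(s) ≥ ∫_0^{A} ρ(t, A) dQ_A(t). -/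
open MeasureTheory Set

/-- Auxiliary: measure of a downward-closed set in `[0,A]` is bounded by `Q' T`,
provided `Q (Iic t) ≤ Q' T` for every `t` in the set. -/
lemma downset_measure_le (Q Q' : Measure ℝ) (A : ℝ) (T : Set ℝ) (S : Set ℝ)
    (hS : S ⊆ Set.Icc 0 A)
    (hSdown : ∀ t ∈ S, ∀ t', 0 ≤ t' → t' ≤ t → t' ∈ S)
    (hkey : ∀ t ∈ S, Q (Set.Iic t) ≤ Q' T) :
    Q S ≤ Q' T := by
  rcases S.eq_empty_or_nonempty with h | h
  · simp [h]
  have hbdd : BddAbove S := ⟨A, fun t ht => (hS ht).2⟩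
  set c := sSup S with hc
  by_cases hcS : c ∈ S
  · exact le_trans (measure_mono fun t ht => le_csSup hbdd ht) (hkey c hcS)
  · obtain ⟨t₀, ht₀⟩ := h
    have ht₀c : t₀ ≤ c := le_csSup hbdd ht₀
    have hc_pos : 0 < c := by
      rcases lt_or_eq_of_le (le_trans (hS ht₀).1 ht₀c) with h' | h'
      · exact h'
      · have ht₀eq : t₀ = c := le_antisymm ht₀c (by rw [← h']; exact (hS ht₀).1)
        exact absurd (ht₀eq ▸ ht₀) hcS
    have hsub : S ⊆ Set.Iio c := fun t ht =>
      lt_of_le_of_ne (le_csSup hbdd ht) (fun he => hcS (by rw [hc, ← he]; exact ht))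
    have hunion : Set.Iio c = ⋃ n : ℕ, Set.Iic (c - c / (n + 1)) := by
      ext x
      simp only [Set.mem_Iio, Set.mem_iUnion, Set.mem_Iic]
      constructor
      · intro hx
        obtain ⟨n, hn⟩ := exists_nat_ge (c / (c - x))
        refine ⟨n, ?_⟩
        have hcx : 0 < c - x := by linarith
        have h1 : c / (c - x) < (n : ℝ) + 1 := lt_of_le_of_lt hn (by linarith)
        have h2 : c < (c - x) * ((n : ℝ) + 1) := by
          rwa [div_lt_iff₀ hcx, mul_comm] at h1
        have hn1 : (0 : ℝ) < (n : ℝ) + 1 := by positivity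
        have : c / ((n : ℝ) + 1) < c - x := by
          rw [div_lt_iff₀ hn1]; nlinarith
        linarith
      · intro ⟨n, hn⟩
        have : 0 < c / ((n : ℝ) + 1) := div_pos hc_pos (by positivity : (0:ℝ) < (n:ℝ) + 1)
        linarith
    have hdir : Directed (· ⊆ ·) (fun n : ℕ => Set.Iic (c - c / (n + 1))) := by
      apply Monotone.directed_le
      intro m n hmn
      apply Set.Iic_subset_Iic.mpr
      have h1 : c / ((n : ℝ) + 1) ≤ c / ((m : ℝ) + 1) := by
        apply div_le_div_of_nonneg_left hc_pos.le (by positivity)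
        exact_mod_cast by omega
      linarith
    calc Q S ≤ Q (Set.Iio c) := measure_mono hsub
      _ = ⨆ n : ℕ, Q (Set.Iic (c - c / ((n : ℝ) + 1))) := by rw [hunion]; exact hdir.measure_iUnion
      _ ≤ Q' T := by
          apply iSup_le
          intro n
          have hlt : c - c / (n + 1) < c := by
            have : 0 < c / ((n : ℝ) + 1) := div_pos hc_pos (by positivity : (0:ℝ) < (n:ℝ) + 1)
            linarith
          obtain ⟨t, htS, ht⟩ := exists_lt_of_lt_csSup ⟨t₀, ht₀⟩ hlt
          exact le_trans (measure_mono (Set.Iic_subset_Iic.mpr ht.le)) (hkey t htS)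

/-- **Key integral inequality.**
Let `A > 0` and `y ≥ 1`.  Let `Q_A` and `Q_{yA}` be probability measures supported on
`[0,A]` and `[0,yA]` respectively, with no atom at `0`, whose CDFs satisfy
`Q_{yA}(yx) ≥ Q_A(x)` for all `x ∈ [0,A]`.  Suppose `s ↦ ρ(s,yA)` is nonincreasing on
`[0,yA]` and `s ↦ ρ(s,A)` is nonincreasing on `[0,A]` (condition (C2)), and that
`ρ(yt, yA) ≥ ρ(t,A)` for all `t ∈ [0,A]` (an instance of condition (C3)), where each
`ρ(·,B)` takes values in `[0,1]` and is measurable.  Then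
`∫₀^{yA} ρ(s,yA) dQ_{yA}(s) ≥ ∫₀^A ρ(t,A) dQ_A(t)`. -/
theorem key_integral_inequality
    (ρ : ℝ → ℝ → ℝ)
    (A y : ℝ) (hA : 0 < A) (hy : 1 ≤ y)
    (hρ01 : ∀ s B : ℝ, 0 ≤ ρ s B ∧ ρ s B ≤ 1)
    (hmeasA : Measurable fun s : ℝ => ρ s A)
    (hmeasyA : Measurable fun s : ℝ => ρ s (y * A))
    -- (C2) at levels `yA` and `A`
    (hmono_yA : ∀ s ∈ Set.Icc (0 : ℝ) (y * A), ∀ s' ∈ Set.Icc (0 : ℝ) (y * A),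
      s ≤ s' → ρ s' (y * A) ≤ ρ s (y * A))
    (hmono_A : ∀ s ∈ Set.Icc (0 : ℝ) A, ∀ s' ∈ Set.Icc (0 : ℝ) A,
      s ≤ s' → ρ s' A ≤ ρ s A)
    -- instance of (C3)
    (hC3 : ∀ t ∈ Set.Icc (0 : ℝ) A, ρ t A ≤ ρ (y * t) (y * A))
    (QA QyA : Measure ℝ)
    (hQAprob : IsProbabilityMeasure QA) (hQyAprob : IsProbabilityMeasure QyA)
    (hQAsupp : QA (Set.Icc (0 : ℝ) A)ᶜ = 0)
    (hQyAsupp : QyA (Set.Icc (0 : ℝ) (y * A))ᶜ = 0)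
    (hQA0 : QA {(0 : ℝ)} = 0) (hQyA0 : QyA {(0 : ℝ)} = 0)
    -- CDF domination: `Q_{yA}(yx) ≥ Q_A(x)` for `x ∈ [0,A]`
    (hcdf : ∀ x ∈ Set.Icc (0 : ℝ) A, QA (Set.Iic x) ≤ QyA (Set.Iic (y * x))) :
    ∫ t, ρ t A ∂QA ≤ ∫ s, ρ s (y * A) ∂QyA := by
  have hy0 : (0 : ℝ) < y := lt_of_lt_of_le one_pos hy
  -- superlevel-set comparison
  have key : ∀ u : ℝ, QA {t | u < ρ t A} ≤ QyA {s | u < ρ s (y * A)} := by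
    intro u
    set S : Set ℝ := {t | u < ρ t A} ∩ Set.Icc 0 A with hSdef
    set T : Set ℝ := {s | u < ρ s (y * A)} ∩ Set.Icc 0 (y * A) with hTdef
    have hST : QA S ≤ QyA T := by
      apply downset_measure_le QA QyA A T S Set.inter_subset_right
      · intro t ht t' h0 htt'
        have htA : t' ≤ A := htt'.trans ht.2.2
        exact ⟨lt_of_lt_of_le ht.1 (hmono_A t' ⟨h0, htA⟩ t ht.2 htt'), h0, htA⟩
      · intro t ht
        have h1 : QA (Set.Iic t) ≤ QyA (Set.Iic (y * t)) := hcdf t ht.2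
        have hsub : Set.Iic (y * t) ⊆ T ∪ ({0} ∪ (Set.Icc 0 (y * A))ᶜ) := by
          intro s hs
          rcases lt_trichotomy s 0 with h | h | h
          · right; right
            simp only [Set.mem_compl_iff, Set.mem_Icc, not_and, not_le]
            intro h'; linarith
          · right; left; simp [h]
          · left
            have hsyt : s ≤ y * t := hs
            have hyt_mem : y * t ∈ Set.Icc 0 (y * A) :=
              ⟨mul_nonneg hy0.le ht.2.1, mul_le_mul_of_nonneg_left ht.2.2 hy0.le⟩
            have hs_mem : s ∈ Set.Icc 0 (y * A) := ⟨h.le, hsyt.trans hyt_mem.2⟩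
            exact ⟨lt_of_lt_of_le (lt_of_lt_of_le ht.1 (hC3 t ht.2))
              (hmono_yA s hs_mem (y * t) hyt_mem hsyt), hs_mem⟩
        calc QA (Set.Iic t) ≤ QyA (Set.Iic (y * t)) := h1
          _ ≤ QyA T + (QyA {0} + QyA (Set.Icc 0 (y * A))ᶜ) :=
              le_trans (measure_mono hsub)
                (le_trans (measure_union_le _ _)
                  (add_le_add_right (measure_union_le _ _) _))
          _ = QyA T := by rw [hQyA0, hQyAsupp]; simp
    calc QA {t | u < ρ t A} ≤ QA S + QA (Set.Icc 0 A)ᶜ := by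
          refine le_trans (measure_mono ?_) (measure_union_le _ _)
          intro t ht
          by_cases h : t ∈ Set.Icc (0 : ℝ) A
          · exact Or.inl ⟨ht, h⟩
          · exact Or.inr h
      _ = QA S := by rw [hQAsupp, add_zero]
      _ ≤ QyA T := hST
      _ ≤ QyA {s | u < ρ s (y * A)} := measure_mono Set.inter_subset_left
  -- pass to integrals via the layer-cake formula
  have hnnA : 0 ≤ᵐ[QA] fun t => ρ t A := ae_of_all _ fun t => (hρ01 t A).1
  have hnnyA : 0 ≤ᵐ[QyA] fun s => ρ s (y * A) := ae_of_all _ fun s => (hρ01 s (y * A)).1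
  rw [integral_eq_lintegral_of_nonneg_ae hnnA hmeasA.aestronglyMeasurable,
    integral_eq_lintegral_of_nonneg_ae hnnyA hmeasyA.aestronglyMeasurable]
  have hbound : ∫⁻ s, ENNReal.ofReal (ρ s (y * A)) ∂QyA ≤ 1 := by
    calc ∫⁻ s, ENNReal.ofReal (ρ s (y * A)) ∂QyA
        ≤ ∫⁻ _, 1 ∂QyA := lintegral_mono fun s => ENNReal.ofReal_le_one.mpr (hρ01 s (y * A)).2
      _ = 1 := by simp
  have hle : ∫⁻ t, ENNReal.ofReal (ρ t A) ∂QA ≤ ∫⁻ s, ENNReal.ofReal (ρ s (y * A)) ∂QyA := by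
    rw [lintegral_eq_lintegral_meas_lt QA hnnA hmeasA.aemeasurable,
      lintegral_eq_lintegral_meas_lt QyA hnnyA hmeasyA.aemeasurable]
    exact lintegral_mono fun u => key u
  exact ENNReal.toReal_mono (lt_of_le_of_lt hbound ENNReal.one_lt_top).ne hle
end

section
/- Let F : ℝ → [0,1] be nondecreasing with F(u) > 0 for u > 0, satisfying (D2): for all 0 < x ≤ B, t ↦ F(tx)/F(tB) is nondecreasing in t > 0. Let φ : [0,∞) → (0,∞) be nondecreasing with t ↦ t/φ(t) nondecreasing on (0,∞). Define ρ(s,x) = F(x/φ(s)). Then ρ satisfies: (C4) for each fixed B > 0 and 0 < x ≤ B, s ↦ ρ(s,x)/ρ(s,B) is nonincreasing on [0,∞); and (C5) for each fixed s > 0, B > 0 and 0 < x ≤ B, t ↦ ρ(ts, tx)/ρ(ts, tB) is nondecreasing on (0,∞). -/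
/-- For Markov processes of the form `M_{n+1} = φ(M_n) · Λ_{n+1}` with i.i.d. positive
multipliers with CDF `F`, the transition function is `ρ(s,x) = F(x/φ(s))`.
Assume `F : ℝ → [0,1]` is nondecreasing, `F(u) > 0` for `u > 0`, and `F` satisfies
(D2): for all `0 < x ≤ B`, `t ↦ F(tx)/F(tB)` is nondecreasing in `t > 0`.
Assume `φ : [0,∞) → (0,∞)` is nondecreasing with `t ↦ t/φ(t)` nondecreasing on `(0,∞)`.
Then `ρ` satisfies:
(C4) for each fixed `B > 0` and `0 < x ≤ B`, `s ↦ ρ(s,x)/ρ(s,B)` is nonincreasing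
on `[0,∞)`; and
(C5) for each fixed `s > 0`, `B > 0` and `0 < x ≤ B`, `t ↦ ρ(ts,tx)/ρ(ts,tB)` is
nondecreasing on `(0,∞)`. -/
theorem multiplicative_recursion_satisfies_C4_C5
    (F : ℝ → ℝ)
    (hF01 : ∀ u : ℝ, 0 ≤ F u ∧ F u ≤ 1)
    (hFmono : Monotone F)
    (hFpos : ∀ u : ℝ, 0 < u → 0 < F u)
    -- (D2)
    (hD2 : ∀ B : ℝ, 0 < B → ∀ x : ℝ, 0 < x → x ≤ B → ∀ t t' : ℝ, 0 < t → t ≤ t' →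
      F (t * x) / F (t * B) ≤ F (t' * x) / F (t' * B))
    (φ : ℝ → ℝ)
    (hφpos : ∀ t : ℝ, 0 ≤ t → 0 < φ t)
    (hφmono : ∀ s t : ℝ, 0 ≤ s → s ≤ t → φ s ≤ φ t)
    (hratio : ∀ s t : ℝ, 0 < s → s ≤ t → s / φ s ≤ t / φ t)
    (ρ : ℝ → ℝ → ℝ)
    (hρ : ∀ s x : ℝ, ρ s x = F (x / φ s)) :
    -- (C4)
    (∀ B : ℝ, 0 < B → ∀ x : ℝ, 0 < x → x ≤ B → ∀ s s' : ℝ, 0 ≤ s → s ≤ s' →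
      ρ s' x / ρ s' B ≤ ρ s x / ρ s B) ∧
    -- (C5)
    (∀ s : ℝ, 0 < s → ∀ B : ℝ, 0 < B → ∀ x : ℝ, 0 < x → x ≤ B →
      ∀ t t' : ℝ, 0 < t → t ≤ t' →
      ρ (t * s) (t * x) / ρ (t * s) (t * B) ≤ ρ (t' * s) (t' * x) / ρ (t' * s) (t' * B)) := by
  constructor
  · intro B hB x hx hxB s s' hs hss'
    have hφs := hφpos s hs
    have hφs' := hφpos s' (hs.trans hss')
    have hle : (1 : ℝ) / φ s' ≤ 1 / φ s :=
      one_div_le_one_div_of_le hφs (hφmono s s' hs hss')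
    have h := hD2 B hB x hx hxB (1 / φ s') (1 / φ s) (by positivity) hle
    rw [hρ, hρ, hρ, hρ]
    simpa [one_div, div_eq_inv_mul] using h
  · intro s hs B hB x hx hxB t t' ht htt'
    have ht' : (0 : ℝ) < t' := ht.trans_le htt'
    have hts : 0 < t * s := by positivity
    have hts' : 0 < t' * s := by positivity
    have hφts := hφpos _ hts.le
    have hφts' := hφpos _ hts'.le
    have hr := hratio (t * s) (t' * s) hts (by nlinarith)
    have hle : t / φ (t * s) ≤ t' / φ (t' * s) := by
      have h1 : t / φ (t * s) = (t * s) / φ (t * s) / s := by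
        field_simp <;> ring
      have h2 : t' / φ (t' * s) = (t' * s) / φ (t' * s) / s := by
        field_simp <;> ring
      rw [h1, h2]
      exact div_le_div_of_nonneg_right hr hs.le
    have h := hD2 B hB x hx hxB (t / φ (t * s)) (t' / φ (t' * s)) (by positivity) hle
    rw [hρ, hρ, hρ, hρ]
    have e1 : t * x / φ (t * s) = t / φ (t * s) * x := by ring
    have e2 : t * B / φ (t * s) = t / φ (t * s) * B := by ring
    have e3 : t' * x / φ (t' * s) = t' / φ (t' * s) * x := by ring
    have e4 : t' * B / φ (t' * s) = t' / φ (t' * s) * B := by ring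
    rw [e1, e2, e3, e4]; exact h
end
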